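/- arXiv:1712.10261 — 4 statements merged into one kernel-verified Lean document; each statement's English description precedes it below -/
import Mathlib

section
/- Let M be any real n×n matrix, let m ≥ 2, and let y₁,…,y_n be unit vectors in ℝ^m. Then there exists x ∈ {−1,1}^n such that Σ_{i,j=1}^n M_{ij}·x_i·x_j ≥ (2/π)·Σ_{i,j=1}^n M_{ij}·arcsin(⟨y_i, y_j⟩). -/
open scoped RealInnerProductSpace

open Real MeasureTheory Set

open Real MeasureTheory Set

noncomputable def sgn1 (t : ℝ) : ℝ := if t < 0 then -1 else 1

lemma sgn1_of_neg {t : ℝ} (h : t < 0) : sgn1 t = -1 := if_pos h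
lemma sgn1_of_nonneg {t : ℝ} (h : 0 ≤ t) : sgn1 t = 1 := if_neg (not_lt.2 h)
lemma abs_sgn1 (t : ℝ) : |sgn1 t| = 1 := by
  unfold sgn1; split <;> simp
lemma measurable_sgn1 : Measurable sgn1 :=
  Measurable.ite (measurableSet_lt measurable_id measurable_const) measurable_const
    measurable_const
lemma sgn1_mul_left {r : ℝ} (hr : 0 < r) (t : ℝ) : sgn1 (r * t) = sgn1 t := by
  unfold sgn1
  rcases lt_trichotomy t 0 with h | h | h
  · rw [if_pos h, if_pos (mul_neg_of_pos_of_neg hr h)]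
  · simp [h]
  · rw [if_neg (not_lt.2 (mul_nonneg hr.le h.le)), if_neg (not_lt.2 h.le)]

lemma integral_eq_const_mul {h : ℝ → ℝ} {a b C : ℝ} (hab : a ≤ b)
    (hc : ∀ θ ∈ Set.Ioo a b, h θ = C) : ∫ θ in a..b, h θ = C * (b - a) := by
  rw [intervalIntegral.integral_of_le hab, integral_Ioc_eq_integral_Ioo, setIntegral_congr_fun measurableSet_Ioo hc,
    setIntegral_const, Real.volume_real_Ioo_of_le hab, smul_eq_mul,
    mul_comm]

lemma five_piece {h : ℝ → ℝ} (hInt : ∀ a b : ℝ, IntervalIntegrable h volume a b)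
    {a0 a1 a2 a3 a4 a5 : ℝ} {c1 c2 c3 c4 c5 : ℝ}
    (h01 : a0 ≤ a1) (h12 : a1 ≤ a2) (h23 : a2 ≤ a3) (h34 : a3 ≤ a4) (h45 : a4 ≤ a5)
    (e1 : ∀ θ ∈ Set.Ioo a0 a1, h θ = c1) (e2 : ∀ θ ∈ Set.Ioo a1 a2, h θ = c2)
    (e3 : ∀ θ ∈ Set.Ioo a2 a3, h θ = c3) (e4 : ∀ θ ∈ Set.Ioo a3 a4, h θ = c4)
    (e5 : ∀ θ ∈ Set.Ioo a4 a5, h θ = c5) :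
    ∫ θ in a0..a5, h θ =
      c1 * (a1 - a0) + c2 * (a2 - a1) + c3 * (a3 - a2) + c4 * (a4 - a3) + c5 * (a5 - a4) := by
  rw [← intervalIntegral.integral_add_adjacent_intervals (b := a1) (hInt _ _) (hInt _ _),
    ← intervalIntegral.integral_add_adjacent_intervals (a := a1) (b := a2) (hInt _ _) (hInt _ _),
    ← intervalIntegral.integral_add_adjacent_intervals (a := a2) (b := a3) (hInt _ _) (hInt _ _),
    ← intervalIntegral.integral_add_adjacent_intervals (a := a3) (b := a4) (hInt _ _) (hInt _ _),
    integral_eq_const_mul h01 e1, integral_eq_const_mul h12 e2, integral_eq_const_mul h23 e3,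
    integral_eq_const_mul h34 e4, integral_eq_const_mul h45 e5]
  ring
lemma sgn1_cos_pos {x : ℝ} (h1 : -(π/2) ≤ x) (h2 : x ≤ π/2) : sgn1 (Real.cos x) = 1 :=
  sgn1_of_nonneg (Real.cos_nonneg_of_mem_Icc ⟨by linarith, by linarith⟩)

lemma sgn1_cos_neg {x : ℝ} (h1 : π/2 < x) (h2 : x < 3*π/2) : sgn1 (Real.cos x) = -1 :=
  sgn1_of_neg (Real.cos_neg_of_pi_div_two_lt_of_lt h1 (by linarith))

lemma sgn1_cos_neg' {x : ℝ} (h1 : -(3*π/2) < x) (h2 : x < -(π/2)) : sgn1 (Real.cos x) = -1 := by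
  rw [← Real.cos_neg]
  exact sgn1_cos_neg (by linarith) (by linarith)

lemma sgn1_cos_pos' {x : ℝ} (h1 : -(2*π) ≤ x) (h2 : x ≤ -(3*π/2)) : sgn1 (Real.cos x) = 1 := by
  rw [← Real.cos_add_two_pi]
  exact sgn1_cos_pos (by linarith [Real.pi_pos]) (by linarith [Real.pi_pos])

lemma angle_integrable (φ : ℝ) (a b : ℝ) :
    IntervalIntegrable (fun θ => sgn1 (Real.cos θ) * sgn1 (Real.cos (θ - φ))) volume a b := by
  rw [intervalIntegrable_iff]
  apply Measure.integrableOn_of_bounded (M := 1)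
  · exact measure_Ioc_lt_top.ne
  · exact ((measurable_sgn1.comp Real.measurable_cos).mul
      (measurable_sgn1.comp (Real.measurable_cos.comp (measurable_id.sub measurable_const)))).aestronglyMeasurable
  · refine Filter.Eventually.of_forall fun θ => ?_
    rw [Real.norm_eq_abs, abs_mul, abs_sgn1, abs_sgn1, one_mul]

lemma angle_integral {φ : ℝ} (h0 : 0 ≤ φ) (hπ : φ ≤ π) :
    ∫ θ in (-π)..π, sgn1 (Real.cos θ) * sgn1 (Real.cos (θ - φ)) = 2*π - 4*φ := by
  have pi_pos := Real.pi_pos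
  rcases le_total φ (π/2) with hc | hc
  · have := five_piece (h := fun θ => sgn1 (Real.cos θ) * sgn1 (Real.cos (θ - φ)))
      (angle_integrable φ) (a0 := -π) (a1 := -(π/2)) (a2 := φ - π/2) (a3 := π/2)
      (a4 := φ + π/2) (a5 := π)
      (c1 := 1) (c2 := -1) (c3 := 1) (c4 := -1) (c5 := 1)
      (by linarith) (by linarith) (by linarith) (by linarith) (by linarith)
      (fun θ ⟨l, r⟩ => by
        beta_reduce
        rw [sgn1_cos_neg' (by linarith) (by linarith),
          sgn1_cos_neg' (x := θ - φ) (by linarith) (by linarith)]; norm_num)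
      (fun θ ⟨l, r⟩ => by
        beta_reduce
        rw [sgn1_cos_pos (by linarith) (by linarith),
          sgn1_cos_neg' (x := θ - φ) (by linarith) (by linarith)]; norm_num)
      (fun θ ⟨l, r⟩ => by
        beta_reduce
        rw [sgn1_cos_pos (by linarith) (by linarith),
          sgn1_cos_pos (x := θ - φ) (by linarith) (by linarith)]; norm_num)
      (fun θ ⟨l, r⟩ => by
        beta_reduce
        rw [sgn1_cos_neg (by linarith) (by linarith),
          sgn1_cos_pos (x := θ - φ) (by linarith) (by linarith)]; norm_num)
      (fun θ ⟨l, r⟩ => by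
        beta_reduce
        rw [sgn1_cos_neg (by linarith) (by linarith),
          sgn1_cos_neg (x := θ - φ) (by linarith) (by linarith)]; norm_num)
    rw [this]; ring
  · have := five_piece (h := fun θ => sgn1 (Real.cos θ) * sgn1 (Real.cos (θ - φ)))
      (angle_integrable φ) (a0 := -π) (a1 := φ - 3*π/2) (a2 := -(π/2)) (a3 := φ - π/2)
      (a4 := π/2) (a5 := π)
      (c1 := -1) (c2 := 1) (c3 := -1) (c4 := 1) (c5 := -1)
      (by linarith) (by linarith) (by linarith) (by linarith) (by linarith)
      (fun θ ⟨l, r⟩ => by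
        beta_reduce
        rw [sgn1_cos_neg' (by linarith) (by linarith),
          sgn1_cos_pos' (x := θ - φ) (by linarith) (by linarith)]; norm_num)
      (fun θ ⟨l, r⟩ => by
        beta_reduce
        rw [sgn1_cos_neg' (by linarith) (by linarith),
          sgn1_cos_neg' (x := θ - φ) (by linarith) (by linarith)]; norm_num)
      (fun θ ⟨l, r⟩ => by
        beta_reduce
        rw [sgn1_cos_pos (by linarith) (by linarith),
          sgn1_cos_neg' (x := θ - φ) (by linarith) (by linarith)]; norm_num)
      (fun θ ⟨l, r⟩ => by
        beta_reduce
        rw [sgn1_cos_pos (by linarith) (by linarith),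
          sgn1_cos_pos (x := θ - φ) (by linarith) (by linarith)]; norm_num)
      (fun θ ⟨l, r⟩ => by
        beta_reduce
        rw [sgn1_cos_neg (by linarith) (by linarith),
          sgn1_cos_pos (x := θ - φ) (by linarith) (by linarith)]; norm_num)
    rw [this]; ring
open Filter in
lemma radial_integral : ∫ r in Ioi (0:ℝ), r * Real.exp (-(r^2/2)) = 1 := by
  have hderiv : ∀ x ∈ Ioi (0:ℝ),
      HasDerivAt (fun r => -Real.exp (-(r^2/2))) (x * Real.exp (-(x^2/2))) x := by
    intro x _
    have h1 : HasDerivAt (fun r : ℝ => -(r^2/2)) (-x) x := by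
      have := ((hasDerivAt_pow 2 x).div_const 2).neg
      refine this.congr_deriv ?_
      push_cast; ring
    have := h1.exp.neg
    refine this.congr_deriv ?_
    ring
  have f'int : IntegrableOn (fun r : ℝ => r * Real.exp (-(r^2/2))) (Ioi 0) := by
    have h := (integrable_mul_exp_neg_mul_sq (b := 1/2) (by norm_num)).integrableOn (s := Ioi 0)
    refine h.congr_fun (fun x _ => by ring_nf) measurableSet_Ioi
  have htend : Filter.Tendsto (fun r : ℝ => -Real.exp (-(r^2/2))) Filter.atTop (nhds 0) := by
    rw [show (0:ℝ) = -0 by norm_num]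
    apply Filter.Tendsto.neg
    apply Real.tendsto_exp_atBot.comp
    apply Filter.tendsto_neg_atTop_atBot.comp
    exact (tendsto_pow_atTop (two_ne_zero)).atTop_div_const (by norm_num)
  have := integral_Ioi_of_hasDerivAt_of_tendsto
    ((Real.continuous_exp.comp (by continuity)).neg.continuousWithinAt) hderiv f'int htend
  rw [this]; norm_num

lemma planar {c s : ℝ} (hs : 0 ≤ s) (hcs : c^2 + s^2 = 1) :
    ∫ p : ℝ × ℝ, sgn1 p.1 * sgn1 (c * p.1 + s * p.2) * Real.exp (-((p.1^2 + p.2^2)/2))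
      = 4 * Real.arcsin c := by
  have hc1 : -1 ≤ c := by nlinarith
  have hc2 : c ≤ 1 := by nlinarith
  have hsq : Real.sqrt (1 - c^2) = s := by
    rw [show 1 - c^2 = s^2 by linarith, Real.sqrt_sq hs]
  set φ := Real.arccos c with hφ
  have hcos : Real.cos φ = c := Real.cos_arccos hc1 hc2
  have hsin : Real.sin φ = s := by rw [hφ, Real.sin_arccos, hsq]
  rw [← integral_comp_polarCoord_symm]
  have htar : polarCoord.target = Ioi (0:ℝ) ×ˢ Ioo (-π) π := rfl
  have hsymm : ∀ p : ℝ × ℝ, polarCoord.symm p = (p.1 * Real.cos p.2, p.1 * Real.sin p.2) :=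
    fun p => rfl
  have heq : ∀ p ∈ polarCoord.target,
      p.1 • (sgn1 (polarCoord.symm p).1 *
        sgn1 (c * (polarCoord.symm p).1 + s * (polarCoord.symm p).2) *
        Real.exp (-(((polarCoord.symm p).1^2 + (polarCoord.symm p).2^2)/2)))
      = (fun r => r * Real.exp (-(r^2/2))) p.1 *
        (fun θ => sgn1 (Real.cos θ) * sgn1 (Real.cos (θ - φ))) p.2 := by
    rintro ⟨r, θ⟩ hp
    rw [htar] at hp
    obtain ⟨hr, -⟩ := hp
    rw [hsymm]
    beta_reduce
    have h1 : sgn1 (r * Real.cos θ) = sgn1 (Real.cos θ) := sgn1_mul_left hr _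
    have h2 : c * (r * Real.cos θ) + s * (r * Real.sin θ) = r * Real.cos (θ - φ) := by
      rw [Real.cos_sub, hcos, hsin]; ring
    have h3 : sgn1 (r * Real.cos (θ - φ)) = sgn1 (Real.cos (θ - φ)) := sgn1_mul_left hr _
    have h4 : (r * Real.cos θ)^2 + (r * Real.sin θ)^2 = r^2 := by
      have := Real.sin_sq_add_cos_sq θ
      nlinarith [this]
    rw [h1, h2, h3, h4, smul_eq_mul]
    ring
  rw [setIntegral_congr_fun (by rw [htar]; exact measurableSet_Ioi.prod measurableSet_Ioo) heq,
    htar, Measure.volume_eq_prod]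
  rw [setIntegral_prod_mul (μ := volume) (ν := volume) (fun r => r * Real.exp (-(r^2/2)))
    (fun θ => sgn1 (Real.cos θ) * sgn1 (Real.cos (θ - φ))) (Ioi 0) (Ioo (-π) π)]
  rw [radial_integral, one_mul, ← integral_Ioc_eq_integral_Ioo,
    ← intervalIntegral.integral_of_le (by linarith [Real.pi_pos]),
    angle_integral (Real.arccos_nonneg c) (Real.arccos_le_pi c)]
  rw [Real.arccos_eq_pi_div_two_sub_arcsin]; ring
open scoped RealInnerProductSpace in
lemma exists_onb {k : ℕ} (u v : EuclideanSpace ℝ (Fin (k+2))) (hu : ‖u‖ = 1) (hv : ‖v‖ = 1) :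
    ∃ b : OrthonormalBasis (Fin (k+2)) ℝ (EuclideanSpace ℝ (Fin (k+2))),
      b 0 = u ∧ v = ⟪u, v⟫ • u + Real.sqrt (1 - ⟪u, v⟫^2) • b 1 := by
  set c : ℝ := ⟪u, v⟫ with hc
  set d : EuclideanSpace ℝ (Fin (k+2)) := v - c • u with hd
  have huu : ⟪u, u⟫ = 1 := by rw [real_inner_self_eq_norm_sq, hu]; norm_num
  have hcard : Module.finrank ℝ (EuclideanSpace ℝ (Fin (k+2))) = Fintype.card (Fin (k+2)) := by
    simp
  have h01 : (0 : Fin (k+2)) ≠ 1 := Fin.ne_of_val_ne (by simp)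
  have hdd : ‖d‖^2 = 1 - c^2 := by
    rw [← real_inner_self_eq_norm_sq, hd, real_inner_sub_sub_self, real_inner_smul_right,
      real_inner_smul_left, real_inner_smul_right, huu, real_inner_self_eq_norm_sq, hv,
      real_inner_comm u v, ← hc]
    ring
  have hds : Real.sqrt (1 - c^2) = ‖d‖ := by
    rw [← hdd, Real.sqrt_sq (norm_nonneg d)]
  by_cases hd0 : d = 0
  · have hvc : v = c • u := by rwa [hd, sub_eq_zero] at hd0
    have horth : Orthonormal ℝ (Set.restrict {(0 : Fin (k+2))} (fun _ => u)) := by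
      rw [orthonormal_iff_ite]
      rintro ⟨i, hi⟩ ⟨j, hj⟩
      simp only [Set.mem_singleton_iff] at hi hj
      subst hi; subst hj
      simp [Set.restrict_apply, huu, Set.restrict, hu]
    obtain ⟨b, hb⟩ := horth.exists_orthonormalBasis_extension_of_card_eq hcard
    refine ⟨b, hb 0 rfl, ?_⟩
    rw [hds, hd0, norm_zero, zero_smul, add_zero, ← hvc]
  · set u' : EuclideanSpace ℝ (Fin (k+2)) := ‖d‖⁻¹ • d with hu'
    have hnd : ‖d‖ ≠ 0 := fun h => hd0 (norm_eq_zero.1 h)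
    have hud : ⟪u, d⟫ = 0 := by
      rw [hd, inner_sub_right, real_inner_smul_right, huu, ← hc]
      ring
    have hnu' : ‖u'‖ = 1 := by
      rw [hu', norm_smul, norm_inv, norm_norm, inv_mul_cancel₀ hnd]
    have hu'u' : ⟪u', u'⟫ = 1 := by rw [real_inner_self_eq_norm_sq, hnu']; norm_num
    have huu'0 : ⟪u, u'⟫ = 0 := by
      rw [hu', real_inner_smul_right, hud, mul_zero]
    have hu'u0 : ⟪u', u⟫ = 0 := by rw [real_inner_comm, huu'0]
    have horth : Orthonormal ℝ
        (Set.restrict {(0 : Fin (k+2)), 1} (fun i => if i = 0 then u else u')) := by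
      rw [orthonormal_iff_ite]
      rintro ⟨i, hi⟩ ⟨j, hj⟩
      simp only [Set.mem_insert_iff, Set.mem_singleton_iff] at hi hj
      rcases hi with rfl | rfl <;> rcases hj with rfl | rfl <;>
        simp [Set.restrict_apply, Set.restrict, hu, h01, h01.symm, huu, hnu', hu'u', huu'0, hu'u0,
          Subtype.ext_iff]
    obtain ⟨b, hb⟩ := horth.exists_orthonormalBasis_extension_of_card_eq hcard
    have hb0 : b 0 = u := by simpa using hb 0 (by simp)
    have hb1 : b 1 = u' := by
      have := hb 1 (by simp)
      simpa [h01.symm] using this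
    refine ⟨b, hb0, ?_⟩
    rw [hds, hb1, hu', smul_smul, mul_inv_cancel₀ hnd, one_smul, hd]
    abel
lemma gauss_1d : ∫ t : ℝ, Real.exp (-(t^2/2)) = Real.sqrt (2*π) := by
  have h := integral_gaussian (1/2)
  simp_rw [show ∀ x : ℝ, -(1/2 : ℝ) * x^2 = -(x^2/2) from fun x => by ring] at h
  rw [h]
  congr 1
  ring

open scoped RealInnerProductSpace in
lemma pair_integral {k : ℕ} (u v : EuclideanSpace ℝ (Fin (k+2))) (hu : ‖u‖ = 1)
    (hv : ‖v‖ = 1) :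
    ∫ w : EuclideanSpace ℝ (Fin (k+2)), sgn1 ⟪u, w⟫ * sgn1 ⟪v, w⟫ * Real.exp (-(‖w‖^2/2))
      = Real.sqrt (2*π) ^ k * (4 * Real.arcsin ⟪u, v⟫) := by
  obtain ⟨b, hb0, hbv⟩ := exists_onb u v hu hv
  set c : ℝ := ⟪u, v⟫ with hc
  set s : ℝ := Real.sqrt (1 - c^2) with hs
  have hs0 : 0 ≤ s := Real.sqrt_nonneg _
  have hc1 : |c| ≤ 1 := by
    rw [hc]
    exact (abs_real_inner_le_norm u v).trans (by rw [hu, hv]; norm_num)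
  have hcs : c^2 + s^2 = 1 := by
    have h2 : c^2 ≤ 1 := by nlinarith [abs_le.1 hc1]
    rw [hs, Real.sq_sqrt (by linarith)]; ring
  have h1 : ∀ w : EuclideanSpace ℝ (Fin (k+2)),
      sgn1 ⟪u, w⟫ * sgn1 ⟪v, w⟫ * Real.exp (-(‖w‖^2/2))
      = sgn1 (b.repr w 0) * sgn1 (c * b.repr w 0 + s * b.repr w 1) *
        Real.exp (-(‖b.repr w‖^2/2)) := by
    intro w
    have e0 : ⟪u, w⟫ = b.repr w 0 := by rw [b.repr_apply_apply, hb0]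
    have e1 : ⟪v, w⟫ = c * b.repr w 0 + s * b.repr w 1 := by
      rw [hbv, inner_add_left, real_inner_smul_left, real_inner_smul_left,
        b.repr_apply_apply, b.repr_apply_apply, ← hb0]
    rw [e0, e1, b.repr.norm_map w]
  have hnorm : ∀ x : Fin (k+2) → ℝ,
      ‖(MeasurableEquiv.toLp 2 (Fin (k+2) → ℝ)) x‖^2 = ∑ i, x i ^ 2 := by
    intro x
    rw [EuclideanSpace.norm_eq, Real.sq_sqrt (Finset.sum_nonneg fun i _ => sq_nonneg _)]
    exact Finset.sum_congr rfl fun i _ => by rw [Real.norm_eq_abs, sq_abs]; rfl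
  set e2 : ((ℝ × ℝ) × (Fin k → ℝ)) ≃ᵐ (Fin (k+2) → ℝ) :=
    MeasurableEquiv.prodAssoc.trans
      (((MeasurableEquiv.refl ℝ).prodCongr
          (MeasurableEquiv.piFinSuccAbove (fun _ : Fin (k+1) => ℝ) 0).symm).trans
        (MeasurableEquiv.piFinSuccAbove (fun _ : Fin (k+2) => ℝ) 0).symm) with he2def
  have mp2 : MeasurePreserving e2 volume volume := by
    have A : MeasurePreserving
        (MeasurableEquiv.prodAssoc : ((ℝ × ℝ) × (Fin k → ℝ)) ≃ᵐ (ℝ × (ℝ × (Fin k → ℝ))))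
        volume volume := volume_preserving_prodAssoc
    have B : MeasurePreserving
        (((MeasurableEquiv.refl ℝ).prodCongr
          (MeasurableEquiv.piFinSuccAbove (fun _ : Fin (k+1) => ℝ) 0).symm))
        volume volume :=
      (MeasurePreserving.id volume).prod
        ((volume_preserving_piFinSuccAbove (fun _ : Fin (k+1) => ℝ) 0).symm)
    have C : MeasurePreserving
        ((MeasurableEquiv.piFinSuccAbove (fun _ : Fin (k+2) => ℝ) 0).symm) volume volume :=
      (volume_preserving_piFinSuccAbove (fun _ : Fin (k+2) => ℝ) 0).symm
    exact (A.trans B).trans C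
  have he2 : ∀ (p : (ℝ × ℝ) × (Fin k → ℝ)),
      e2 p = Fin.cons p.1.1 (Fin.cons p.1.2 p.2) := by
    intro p
    show Fin.insertNth (α := fun _ : Fin (k+2) => ℝ) 0 p.1.1
      (Fin.insertNth (α := fun _ : Fin (k+1) => ℝ) 0 p.1.2 p.2) = _
    rw [Fin.insertNth_zero, Fin.insertNth_zero]
    simp
  have hexp : ∀ (r : Fin k → ℝ),
      Real.exp (-((∑ j, r j ^ 2)/2)) = ∏ j, Real.exp (-(r j ^ 2/2)) := by
    intro r
    rw [← Real.exp_sum]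
    congr 1
    rw [Finset.sum_neg_distrib, Finset.sum_div]
  calc ∫ w : EuclideanSpace ℝ (Fin (k+2)), sgn1 ⟪u, w⟫ * sgn1 ⟪v, w⟫ * Real.exp (-(‖w‖^2/2))
      = ∫ w : EuclideanSpace ℝ (Fin (k+2)),
          (fun x : EuclideanSpace ℝ (Fin (k+2)) =>
            sgn1 (x 0) * sgn1 (c * x 0 + s * x 1) * Real.exp (-(‖x‖^2/2))) (b.repr w) :=
        integral_congr_ae (Filter.Eventually.of_forall h1)
    _ = ∫ x : EuclideanSpace ℝ (Fin (k+2)),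
          sgn1 (x 0) * sgn1 (c * x 0 + s * x 1) * Real.exp (-(‖x‖^2/2)) :=
        b.measurePreserving_repr.integral_comp
          (show MeasurableEmbedding (⇑b.repr) from b.repr.toHomeomorph.measurableEmbedding)
          (fun x : EuclideanSpace ℝ (Fin (k+2)) =>
            sgn1 (x 0) * sgn1 (c * x 0 + s * x 1) * Real.exp (-(‖x‖^2/2)))
    _ = ∫ x : Fin (k+2) → ℝ,
          (fun y : EuclideanSpace ℝ (Fin (k+2)) =>
            sgn1 (y 0) * sgn1 (c * y 0 + s * y 1) * Real.exp (-(‖y‖^2/2)))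
          ((MeasurableEquiv.toLp 2 (Fin (k+2) → ℝ)) x) :=
        (((EuclideanSpace.volume_preserving_symm_measurableEquiv_toLp (Fin (k+2))).symm _).integral_comp
          (MeasurableEquiv.measurableEmbedding _)
          (fun y : EuclideanSpace ℝ (Fin (k+2)) =>
            sgn1 (y 0) * sgn1 (c * y 0 + s * y 1) * Real.exp (-(‖y‖^2/2)))).symm
    _ = ∫ x : Fin (k+2) → ℝ,
          sgn1 (x 0) * sgn1 (c * x 0 + s * x 1) * Real.exp (-((∑ i, x i ^ 2)/2)) :=
        integral_congr_ae (Filter.Eventually.of_forall fun x => by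
          beta_reduce; rw [hnorm x]; rfl)
    _ = ∫ q : (ℝ × ℝ) × (Fin k → ℝ),
          (fun x : Fin (k+2) → ℝ =>
            sgn1 (x 0) * sgn1 (c * x 0 + s * x 1) * Real.exp (-((∑ i, x i ^ 2)/2))) (e2 q) :=
        (mp2.integral_comp e2.measurableEmbedding
          (fun x : Fin (k+2) → ℝ =>
            sgn1 (x 0) * sgn1 (c * x 0 + s * x 1) * Real.exp (-((∑ i, x i ^ 2)/2)))).symm
    _ = ∫ q : (ℝ × ℝ) × (Fin k → ℝ),
          (fun p : ℝ × ℝ => sgn1 p.1 * sgn1 (c * p.1 + s * p.2) *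
            Real.exp (-((p.1^2 + p.2^2)/2))) q.1 *
          (fun r : Fin k → ℝ => ∏ j, Real.exp (-(r j ^ 2/2))) q.2 := by
        refine integral_congr_ae (Filter.Eventually.of_forall ?_)
        rintro ⟨⟨a, bb⟩, r⟩
        have he2' : e2 ((a, bb), r) = Fin.cons a (Fin.cons bb r) := he2 _
        dsimp only
        rw [he2']
        have hx1 : (Fin.cons a (Fin.cons bb r) : Fin (k+2) → ℝ) 1 = bb := by simp
        have hx0 : (Fin.cons a (Fin.cons bb r) : Fin (k+2) → ℝ) 0 = a := rfl
        have hsum2 : ∑ i, (Fin.cons a (Fin.cons bb r) : Fin (k+2) → ℝ) i ^ 2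
            = a^2 + bb^2 + ∑ j, r j ^2 := by
          simp [Fin.sum_univ_succ]; ring
        have hEE : Real.exp (-((a^2 + bb^2 + ∑ j, r j ^2)/2))
            = Real.exp (-((a^2 + bb^2)/2)) * Real.exp (-((∑ j, r j ^2)/2)) := by
          rw [← Real.exp_add]; congr 1; ring
        rw [hx1, hx0, hsum2, ← hexp r, hEE]
        ring
    _ = (∫ p : ℝ × ℝ, sgn1 p.1 * sgn1 (c * p.1 + s * p.2) *
            Real.exp (-((p.1^2 + p.2^2)/2))) *
          ∫ r : Fin k → ℝ, ∏ j, Real.exp (-(r j ^ 2/2)) := by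
        rw [Measure.volume_eq_prod]
        exact integral_prod_mul
          (f := fun p : ℝ × ℝ => sgn1 p.1 * sgn1 (c * p.1 + s * p.2) *
            Real.exp (-((p.1^2 + p.2^2)/2)))
          (g := fun r : Fin k → ℝ => ∏ j, Real.exp (-(r j ^ 2/2)))
    _ = Real.sqrt (2*π) ^ k * (4 * Real.arcsin c) := by
        rw [planar hs0 hcs, volume_pi, integral_fintype_prod_eq_pow (ι := Fin k) (fun t => Real.exp (-(t^2/2))),
          gauss_1d, Fintype.card_fin]
        ring
lemma sgn1_cases (t : ℝ) : sgn1 t = 1 ∨ sgn1 t = -1 := by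
  unfold sgn1; split
  · right; rfl
  · left; rfl

lemma hnorm_gen (m : ℕ) (x : Fin m → ℝ) :
    ‖(MeasurableEquiv.toLp 2 (Fin m → ℝ)) x‖^2 = ∑ i, x i ^ 2 := by
  rw [EuclideanSpace.norm_eq, Real.sq_sqrt (Finset.sum_nonneg fun i _ => sq_nonneg _)]
  exact Finset.sum_congr rfl fun i _ => by rw [Real.norm_eq_abs, sq_abs]; rfl

lemma hexp_gen (m : ℕ) (r : Fin m → ℝ) :
    Real.exp (-((∑ j, r j ^ 2)/2)) = ∏ j, Real.exp (-(r j ^ 2/2)) := by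
  rw [← Real.exp_sum]
  congr 1
  rw [Finset.sum_neg_distrib, Finset.sum_div]

lemma gauss_total (m : ℕ) :
    ∫ w : EuclideanSpace ℝ (Fin m), Real.exp (-(‖w‖^2/2)) = Real.sqrt (2*π) ^ m := by
  calc ∫ w : EuclideanSpace ℝ (Fin m), Real.exp (-(‖w‖^2/2))
      = ∫ x : Fin m → ℝ, (fun y : EuclideanSpace ℝ (Fin m) => Real.exp (-(‖y‖^2/2)))
          ((MeasurableEquiv.toLp 2 (Fin m → ℝ)) x) :=
        (((EuclideanSpace.volume_preserving_symm_measurableEquiv_toLp (Fin m)).symm _).integral_comp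
          (MeasurableEquiv.measurableEmbedding _)
          (fun y : EuclideanSpace ℝ (Fin m) => Real.exp (-(‖y‖^2/2)))).symm
    _ = ∫ x : Fin m → ℝ, ∏ i, Real.exp (-(x i ^ 2/2)) :=
        integral_congr_ae (Filter.Eventually.of_forall fun x => by
          beta_reduce; rw [hnorm_gen m x, hexp_gen m x])
    _ = Real.sqrt (2*π) ^ m := by
        rw [volume_pi, integral_fintype_prod_eq_pow (ι := Fin m) (fun t => Real.exp (-(t^2/2))), gauss_1d,
          Fintype.card_fin]

lemma gauss_int_1d : Integrable (fun t : ℝ => Real.exp (-(t^2/2))) := by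
  have h := integrable_exp_neg_mul_sq (b := 1/2) (by norm_num)
  exact h.congr (Filter.Eventually.of_forall fun x => by beta_reduce; rw [show -(1/2:ℝ) * x^2 = -(x^2/2) by ring])

lemma gauss_integrable (m : ℕ) :
    Integrable (fun w : EuclideanSpace ℝ (Fin m) => Real.exp (-(‖w‖^2/2))) := by
  have hpi : Integrable (fun x : Fin m → ℝ => ∏ i, Real.exp (-(x i ^ 2/2))) :=
    Integrable.fintype_prod (f := fun _ t => Real.exp (-(t^2/2))) (fun _ => gauss_int_1d)
  have hpi2 : Integrable (fun x : Fin m → ℝ =>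
      (fun y : EuclideanSpace ℝ (Fin m) => Real.exp (-(‖y‖^2/2)))
        ((MeasurableEquiv.toLp 2 (Fin m → ℝ)) x)) :=
    hpi.congr (Filter.Eventually.of_forall fun x => by
      beta_reduce; rw [hnorm_gen m x, hexp_gen m x])
  have hmp := ((EuclideanSpace.volume_preserving_symm_measurableEquiv_toLp (Fin m)).symm
    ((MeasurableEquiv.toLp 2 (Fin m → ℝ)).symm))
  exact ((hmp.integrable_comp_emb (MeasurableEquiv.measurableEmbedding _)).1 hpi2)
open scoped RealInnerProductSpace in
lemma term_integrable {n k : ℕ} (M : Matrix (Fin n) (Fin n) ℝ)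
    (y : Fin n → EuclideanSpace ℝ (Fin (k+2))) (i j : Fin n) :
    Integrable (fun w : EuclideanSpace ℝ (Fin (k+2)) =>
      M i j * sgn1 ⟪y i, w⟫ * sgn1 ⟪y j, w⟫ * Real.exp (-(‖w‖^2/2))) := by
  refine Integrable.mono' ((gauss_integrable (k+2)).const_mul |M i j|) ?_ ?_
  · refine (((measurable_const.mul ?_).mul ?_).mul ?_).aestronglyMeasurable
    · exact measurable_sgn1.comp (Continuous.measurable (continuous_const.inner continuous_id))
    · exact measurable_sgn1.comp (Continuous.measurable (continuous_const.inner continuous_id))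
    · exact (Real.continuous_exp.comp (by continuity)).measurable
  · refine Filter.Eventually.of_forall fun w => ?_
    rw [Real.norm_eq_abs, abs_mul, abs_mul, abs_mul, abs_sgn1, abs_sgn1,
      Real.abs_exp]
    rw [mul_one, mul_one]

open scoped RealInnerProductSpace in
lemma key_integral {n k : ℕ} (M : Matrix (Fin n) (Fin n) ℝ)
    (y : Fin n → EuclideanSpace ℝ (Fin (k+2))) (hy : ∀ i, ‖y i‖ = 1) :
    ∫ w : EuclideanSpace ℝ (Fin (k+2)),
        (∑ i, ∑ j, M i j * sgn1 ⟪y i, w⟫ * sgn1 ⟪y j, w⟫) * Real.exp (-(‖w‖^2/2))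
      = Real.sqrt (2*π) ^ (k+2) *
          ((2 / π) * ∑ i, ∑ j, M i j * Real.arcsin ⟪y i, y j⟫) := by
  have hInt_term : ∀ i j : Fin n, Integrable (fun w : EuclideanSpace ℝ (Fin (k+2)) =>
      M i j * sgn1 ⟪y i, w⟫ * sgn1 ⟪y j, w⟫ * Real.exp (-(‖w‖^2/2))) :=
    fun i j => term_integrable M y i j
  calc ∫ w : EuclideanSpace ℝ (Fin (k+2)),
        (∑ i, ∑ j, M i j * sgn1 ⟪y i, w⟫ * sgn1 ⟪y j, w⟫) * Real.exp (-(‖w‖^2/2))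
      = ∫ w : EuclideanSpace ℝ (Fin (k+2)),
          ∑ i, ∑ j, M i j * sgn1 ⟪y i, w⟫ * sgn1 ⟪y j, w⟫ * Real.exp (-(‖w‖^2/2)) := by
        refine integral_congr_ae (Filter.Eventually.of_forall fun w => ?_)
        beta_reduce
        rw [Finset.sum_mul]
        exact Finset.sum_congr rfl fun i _ => by rw [Finset.sum_mul]
    _ = ∑ i, ∑ j, ∫ w : EuclideanSpace ℝ (Fin (k+2)),
          M i j * sgn1 ⟪y i, w⟫ * sgn1 ⟪y j, w⟫ * Real.exp (-(‖w‖^2/2)) := by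
        rw [integral_finset_sum _
          (fun i _ => integrable_finset_sum _ (fun j _ => hInt_term i j))]
        exact Finset.sum_congr rfl fun i _ => integral_finset_sum _ (fun j _ => hInt_term i j)
    _ = ∑ i, ∑ j, M i j * (Real.sqrt (2*π) ^ k * (4 * Real.arcsin ⟪y i, y j⟫)) := by
        refine Finset.sum_congr rfl fun i _ => Finset.sum_congr rfl fun j _ => ?_
        rw [show (fun w : EuclideanSpace ℝ (Fin (k+2)) =>
            M i j * sgn1 ⟪y i, w⟫ * sgn1 ⟪y j, w⟫ * Real.exp (-(‖w‖^2/2)))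
          = fun w => M i j * (sgn1 ⟪y i, w⟫ * sgn1 ⟪y j, w⟫ * Real.exp (-(‖w‖^2/2)))
          from funext fun w => by ring]
        rw [integral_const_mul, pair_integral (y i) (y j) (hy i) (hy j)]
    _ = Real.sqrt (2*π) ^ (k+2) *
          ((2 / π) * ∑ i, ∑ j, M i j * Real.arcsin ⟪y i, y j⟫) := by
        have h2 : Real.sqrt (2*π) * Real.sqrt (2*π) = 2*π :=
          Real.mul_self_sqrt (by positivity)
        have hπ : (π:ℝ) ≠ 0 := Real.pi_ne_zero
        simp_rw [Finset.mul_sum]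
        refine Finset.sum_congr rfl fun i _ => Finset.sum_congr rfl fun j _ => ?_
        rw [pow_succ, pow_succ, mul_assoc (Real.sqrt (2*π) ^ k), h2]
        field_simp
        ring


/-- **Goemans–Williamson hyperplane rounding.** For any real `n×n` matrix `M` and unit
vectors `y₁,…,y_n ∈ ℝᵐ` (`m ≥ 2`), there are signs `x ∈ {-1,1}ⁿ` with
`Σ M_ij x_i x_j ≥ (2/π) Σ M_ij arcsin⟨y_i,y_j⟩`. -/
theorem hyperplane_rounding (n m : ℕ) (hm : 2 ≤ m) (M : Matrix (Fin n) (Fin n) ℝ)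
    (y : Fin n → EuclideanSpace ℝ (Fin m)) (hy : ∀ i, ‖y i‖ = 1) :
    ∃ x : Fin n → ℝ, (∀ i, x i = 1 ∨ x i = -1) ∧
      (2 / Real.pi) * ∑ i, ∑ j, M i j * Real.arcsin ⟪y i, y j⟫ ≤
        ∑ i, ∑ j, M i j * x i * x j := by
  obtain ⟨k, rfl⟩ : ∃ k, m = k + 2 := ⟨m - 2, by omega⟩
  by_contra hcon
  push_neg at hcon
  set A : ℝ := (2 / π) * ∑ i, ∑ j, M i j * Real.arcsin ⟪y i, y j⟫ with hA
  set Z : ℝ := Real.sqrt (2*π) ^ (k+2) with hZ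
  set f : EuclideanSpace ℝ (Fin (k+2)) → ℝ :=
    fun w => ∑ i, ∑ j, M i j * sgn1 ⟪y i, w⟫ * sgn1 ⟪y j, w⟫ with hf
  set g : EuclideanSpace ℝ (Fin (k+2)) → ℝ := fun w => Real.exp (-(‖w‖^2/2)) with hg
  have hflt : ∀ w, f w < A := by
    intro w
    exact hcon (fun i => sgn1 ⟪y i, w⟫) (fun i => sgn1_cases _)
  have hkey : ∫ w, f w * g w = Z * A := key_integral M y hy
  have hint_fg : Integrable (fun w => f w * g w) := by
    have h1 : Integrable (fun w : EuclideanSpace ℝ (Fin (k+2)) =>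
        ∑ i, ∑ j, M i j * sgn1 ⟪y i, w⟫ * sgn1 ⟪y j, w⟫ * Real.exp (-(‖w‖^2/2))) :=
      integrable_finset_sum _ fun i _ => integrable_finset_sum _
        fun j _ => term_integrable M y i j
    refine h1.congr (Filter.Eventually.of_forall fun w => ?_)
    rw [hf, hg]
    beta_reduce
    rw [Finset.sum_mul]
    exact Finset.sum_congr rfl fun i _ => by rw [Finset.sum_mul]
  have hAg : Integrable (fun w => A * g w) := (gauss_integrable (k+2)).const_mul A
  have hgpos : ∀ w, 0 < g w := fun w => Real.exp_pos _
  have hIsub : ∫ w, (A * g w - f w * g w) = 0 := by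
    rw [integral_sub hAg hint_fg, hkey, integral_const_mul, hg]
    beta_reduce
    rw [gauss_total, ← hZ]
    ring
  have hpos : ∀ w, 0 < A * g w - f w * g w := by
    intro w
    have h1 := hflt w
    have h2 := hgpos w
    nlinarith
  have hsupp : Function.support (fun w => A * g w - f w * g w) = Set.univ :=
    Set.eq_univ_of_forall fun w => (hpos w).ne'
  have : 0 < ∫ w, (A * g w - f w * g w) := by
    rw [integral_pos_iff_support_of_nonneg (fun w => (hpos w).le) (hAg.sub hint_fg)]
    rw [hsupp]
    exact isOpen_univ.measure_pos volume ⟨0, trivial⟩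
  rw [hIsub] at this
  exact lt_irrefl 0 this
end

section
/- Let G and H be simple d-regular bipartite graphs (d ≥ 1) on the same vertex set {1,…,n} with the same bipartition L ∪ R, let M = A_H − A_G, and for each i let z_i ∈ ℝ^n be the i-th column of the matrix I + M/√d. Then: (1) 1 ≤ ‖z_i‖² ≤ 3 for every i; (2) for all i,j, M_{ij}·⟨z_i, z_j⟩ equals 2/√d if {i,j} ∈ E(G) Δ E(H) and equals 0 if M_{ij} = 0; and consequently, setting y_i = z_i/‖z_i‖, one has Σ_{i,j=1}^n M_{ij}·⟨y_i, y_j⟩ ≥ (4/(3√d))·|E(G) Δ E(H)|. -/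
open Matrix

/-- The adjacency matrix of a simple graph `G` on vertex set `Fin n`, with real entries. -/
noncomputable def adjMat {n : ℕ} (G : SimpleGraph (Fin n)) : Matrix (Fin n) (Fin n) ℝ :=
  letI := Classical.decRel G.Adj
  G.adjMatrix ℝ

/-- `G` is `d`-regular: every vertex has degree `d`. -/
def IsRegOfDeg {n : ℕ} (G : SimpleGraph (Fin n)) (d : ℕ) : Prop :=
  letI := Classical.decRel G.Adj
  G.IsRegularOfDegree d

/-- `G` is bipartite with bipartition `L ∪ Lᶜ`: every edge has one endpoint in `L` and one
outside `L`. -/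
def IsBipartiteWith {n : ℕ} (G : SimpleGraph (Fin n)) (L : Set (Fin n)) : Prop :=
  ∀ u v, G.Adj u v → (u ∈ L ↔ v ∉ L)

/-- **The SDP vectors for cut rigidity.** Let `G, H` be simple `d`-regular bipartite graphs
on `{1,…,n}` with the same bipartition, `M = A_H - A_G`, and let `zᵢ` be the `i`-th column of
`I + M/√d`. Then `1 ≤ ‖zᵢ‖² ≤ 3`; `M_ij⟨zᵢ,zⱼ⟩ = 2/√d` when `{i,j} ∈ E(G) Δ E(H)` and `= 0`
when `M_ij = 0`; and for `yᵢ = zᵢ/‖zᵢ‖` one has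
`Σ_{ij} M_ij ⟨yᵢ,yⱼ⟩ ≥ (4/(3√d))·|E(G) Δ E(H)|`. -/
theorem sdp_vectors_for_cut_rigidity (n d : ℕ) (hd : 1 ≤ d) (L : Set (Fin n))
    (G H : SimpleGraph (Fin n))
    (hG : IsRegOfDeg G d) (hH : IsRegOfDeg H d)
    (hGbip : IsBipartiteWith G L) (hHbip : IsBipartiteWith H L)
    (M : Matrix (Fin n) (Fin n) ℝ) (hM : M = adjMat H - adjMat G)
    (z : Fin n → Fin n → ℝ)
    (hz : ∀ i j, z i j = ((1 : Matrix (Fin n) (Fin n) ℝ) + (Real.sqrt d)⁻¹ • M) j i)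
    (y : Fin n → Fin n → ℝ)
    (hy : ∀ i, y i = (Real.sqrt (∑ k, (z i k) ^ 2))⁻¹ • z i) :
    (∀ i, 1 ≤ ∑ k, (z i k) ^ 2 ∧ ∑ k, (z i k) ^ 2 ≤ 3) ∧
    (∀ i j,
      (s(i, j) ∈ symmDiff G.edgeSet H.edgeSet →
        M i j * (∑ k, z i k * z j k) = 2 / Real.sqrt d) ∧
      (M i j = 0 → M i j * (∑ k, z i k * z j k) = 0)) ∧
    (4 / (3 * Real.sqrt d)) * ((symmDiff G.edgeSet H.edgeSet).ncard : ℝ) ≤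
      ∑ i, ∑ j, M i j * ∑ k, y i k * y j k := by
  classical
  have hdR : (0:ℝ) < (d:ℝ) := by exact_mod_cast hd
  set s : ℝ := Real.sqrt d with hs_def
  have hs0 : 0 < s := Real.sqrt_pos.mpr hdR
  have hs2 : s * s = (d:ℝ) := Real.mul_self_sqrt hdR.le
  have hsinv : s⁻¹ * s⁻¹ = ((d:ℝ))⁻¹ := by rw [← mul_inv, hs2]
  -- values of M
  have hMval : ∀ i j, M i j
      = (if H.Adj i j then (1:ℝ) else 0) - (if G.Adj i j then (1:ℝ) else 0) := by
    intro i j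
    rw [hM]
    simp [adjMat, Matrix.sub_apply]
  have hMsymm : ∀ i j, M i j = M j i := by
    intro i j
    rw [hMval i j, hMval j i,
      if_congr (H.adj_comm i j) rfl rfl, if_congr (G.adj_comm i j) rfl rfl]
  have hMdiag : ∀ i, M i i = 0 := by
    intro i; rw [hMval]; simp
  have hMone : ∀ i j, M i j ≠ 0 → M i j * M i j = 1 := by
    intro i j h
    rw [hMval] at h ⊢
    by_cases hg : G.Adj i j <;> by_cases hh : H.Adj i j <;> simp [hg, hh] at h ⊢
  have hbipM : ∀ i j, M i j ≠ 0 → (i ∈ L ↔ j ∉ L) := by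
    intro i j h
    by_cases hg : G.Adj i j
    · exact hGbip i j hg
    · have hh : H.Adj i j := by
        by_contra hh
        exact h (by rw [hMval]; simp [hg, hh])
      exact hHbip i j hh
  have hMM : ∀ i j, M i j ≠ 0 → ∑ k, M k i * M k j = 0 := by
    intro i j hij
    apply Finset.sum_eq_zero
    intro k _
    by_cases h1 : M k i = 0
    · rw [h1, zero_mul]
    by_cases h2 : M k j = 0
    · rw [h2, mul_zero]
    · exfalso
      have e1 := hbipM k i h1
      have e2 := hbipM k j h2
      have e3 := hbipM i j hij
      tauto
  -- membership in the symmetric difference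
  have hne_iff : ∀ i j, s(i, j) ∈ symmDiff G.edgeSet H.edgeSet ↔ M i j ≠ 0 := by
    intro i j
    rw [Set.mem_symmDiff]
    simp only [SimpleGraph.mem_edgeSet]
    rw [hMval]
    by_cases hg : G.Adj i j <;> by_cases hh : H.Adj i j <;> simp [hg, hh]
  -- the z vectors
  have hzval : ∀ i k, z i k = (if k = i then (1:ℝ) else 0) + s⁻¹ * M k i := by
    intro i k
    rw [hz]
    simp [Matrix.add_apply, Matrix.one_apply]
  -- inner products of z vectors
  have hP : ∀ i j, (∑ k, z i k * z j k)
      = (if i = j then (1:ℝ) else 0) + s⁻¹ * M i j + s⁻¹ * M j i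
        + s⁻¹ * s⁻¹ * ∑ k, M k i * M k j := by
    intro i j
    have hterm : ∀ k, z i k * z j k
        = ((if k = i then (1:ℝ) else 0) * (if k = j then (1:ℝ) else 0)
          + (if k = i then (1:ℝ) else 0) * (s⁻¹ * M k j))
          + ((if k = j then (1:ℝ) else 0) * (s⁻¹ * M k i)
          + s⁻¹ * s⁻¹ * (M k i * M k j)) := by
      intro k; rw [hzval, hzval]; ring
    rw [Finset.sum_congr rfl fun k _ => hterm k]
    rw [Finset.sum_add_distrib, Finset.sum_add_distrib, Finset.sum_add_distrib]
    have e1 : (∑ k, (if k = i then (1:ℝ) else 0) * (if k = j then (1:ℝ) else 0))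
        = (if i = j then (1:ℝ) else 0) := by
      simp [ite_mul, eq_comm]
    have e2 : (∑ k, (if k = i then (1:ℝ) else 0) * (s⁻¹ * M k j)) = s⁻¹ * M i j := by
      simp [ite_mul, hMsymm i j]
    have e3 : (∑ k, (if k = j then (1:ℝ) else 0) * (s⁻¹ * M k i)) = s⁻¹ * M j i := by
      simp [ite_mul, hMsymm j i]
    have e4 : (∑ k, s⁻¹ * s⁻¹ * (M k i * M k j)) = s⁻¹ * s⁻¹ * ∑ k, M k i * M k j := by
      rw [Finset.mul_sum]
    rw [e1, e2, e3, e4]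
    ring
  -- squared norms
  have hNval : ∀ i, (∑ k, (z i k) ^ 2) = 1 + s⁻¹ * s⁻¹ * ∑ k, M k i * M k i := by
    intro i
    have : (∑ k, (z i k) ^ 2) = ∑ k, z i k * z i k := by
      apply Finset.sum_congr rfl; intro k _; ring
    rw [this, hP i i, hMdiag i]
    simp
  -- degree sums
  have hdegG : ∀ i, (∑ k, (if G.Adj k i then (1:ℝ) else 0)) = d := by
    intro i
    have e : (∑ k, (if G.Adj k i then (1:ℝ) else 0))
        = ∑ k, (if G.Adj i k then (1:ℝ) else 0) :=
      Finset.sum_congr rfl fun k _ => if_congr (G.adj_comm k i) rfl rfl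
    rw [e, Finset.sum_boole]
    have hdeg := hG i
    have : (Finset.univ.filter fun k => G.Adj i k) = G.neighborFinset i := by
      ext k; simp
    rw [this]
    exact_mod_cast hdeg
  have hdegH : ∀ i, (∑ k, (if H.Adj k i then (1:ℝ) else 0)) = d := by
    intro i
    have e : (∑ k, (if H.Adj k i then (1:ℝ) else 0))
        = ∑ k, (if H.Adj i k then (1:ℝ) else 0) :=
      Finset.sum_congr rfl fun k _ => if_congr (H.adj_comm k i) rfl rfl
    rw [e, Finset.sum_boole]
    have hdeg := hH i
    have : (Finset.univ.filter fun k => H.Adj i k) = H.neighborFinset i := by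
      ext k; simp
    rw [this]
    exact_mod_cast hdeg
  have hQ0 : ∀ i, (0:ℝ) ≤ ∑ k, M k i * M k i :=
    fun i => Finset.sum_nonneg fun k _ => mul_self_nonneg _
  have hQle : ∀ i, (∑ k, M k i * M k i) ≤ 2 * (d:ℝ) := by
    intro i
    have hb : ∀ k, M k i * M k i
        ≤ (if G.Adj k i then (1:ℝ) else 0) + (if H.Adj k i then (1:ℝ) else 0) := by
      intro k
      rw [hMval]
      by_cases hg : G.Adj k i <;> by_cases hh : H.Adj k i <;> simp [hg, hh] <;> norm_num
    calc (∑ k, M k i * M k i)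
        ≤ ∑ k, ((if G.Adj k i then (1:ℝ) else 0) + (if H.Adj k i then (1:ℝ) else 0)) :=
          Finset.sum_le_sum fun k _ => hb k
      _ = (d:ℝ) + (d:ℝ) := by rw [Finset.sum_add_distrib, hdegG i, hdegH i]
      _ = 2 * (d:ℝ) := by ring
  -- Part 1
  have part1 : ∀ i, 1 ≤ (∑ k, (z i k) ^ 2) ∧ (∑ k, (z i k) ^ 2) ≤ 3 := by
    intro i
    rw [hNval i, hsinv]
    constructor
    · have : 0 ≤ ((d:ℝ))⁻¹ * ∑ k, M k i * M k i := by
        apply mul_nonneg (inv_nonneg.mpr hdR.le) (hQ0 i)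
      linarith
    · have h1 : ((d:ℝ))⁻¹ * (∑ k, M k i * M k i) ≤ ((d:ℝ))⁻¹ * (2 * d) :=
        mul_le_mul_of_nonneg_left (hQle i) (inv_nonneg.mpr hdR.le)
      have h2 : ((d:ℝ))⁻¹ * (2 * (d:ℝ)) = 2 := by field_simp
      linarith
  -- core identity
  have hMP : ∀ i j, M i j ≠ 0 → M i j * (∑ k, z i k * z j k) = 2 / s := by
    intro i j hne
    have hij : i ≠ j := fun h => hne (by rw [h]; exact hMdiag j)
    rw [hP i j, ← hMsymm i j, hMM i j hne, if_neg hij]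
    have h1 := hMone i j hne
    field_simp
    linear_combination (2 * s) * h1
  -- Part 2
  have part2 : ∀ i j,
      (s(i, j) ∈ symmDiff G.edgeSet H.edgeSet →
        M i j * (∑ k, z i k * z j k) = 2 / s) ∧
      (M i j = 0 → M i j * (∑ k, z i k * z j k) = 0) := by
    intro i j
    exact ⟨fun hmem => hMP i j ((hne_iff i j).mp hmem), fun h0 => by rw [h0, zero_mul]⟩
  refine ⟨part1, part2, ?_⟩
  -- Part 3
  set c : Fin n → ℝ := fun i => (Real.sqrt (∑ k, (z i k) ^ 2))⁻¹ with hc_def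
  have hc_pos : ∀ i, 0 < c i := by
    intro i
    exact inv_pos.mpr (Real.sqrt_pos.mpr (lt_of_lt_of_le one_pos (part1 i).1))
  have hc_lb : ∀ i, (Real.sqrt 3)⁻¹ ≤ c i := by
    intro i
    apply inv_anti₀ (Real.sqrt_pos.mpr (lt_of_lt_of_le one_pos (part1 i).1))
    exact Real.sqrt_le_sqrt (part1 i).2
  have hcc : ∀ i j, (3:ℝ)⁻¹ ≤ c i * c j := by
    intro i j
    have h3 : (Real.sqrt 3)⁻¹ * (Real.sqrt 3)⁻¹ = (3:ℝ)⁻¹ := by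
      rw [← mul_inv, Real.mul_self_sqrt (by norm_num : (0:ℝ) ≤ 3)]
    calc (3:ℝ)⁻¹ = (Real.sqrt 3)⁻¹ * (Real.sqrt 3)⁻¹ := h3.symm
      _ ≤ c i * c j := by
          apply mul_le_mul (hc_lb i) (hc_lb j) (by positivity) (hc_pos i).le
  have hy_inner : ∀ i j, (∑ k, y i k * y j k) = c i * c j * ∑ k, z i k * z j k := by
    intro i j
    have e : ∀ k, y i k * y j k = (c i * c j) * (z i k * z j k) := by
      intro k
      rw [hy i, hy j]
      simp only [Pi.smul_apply, smul_eq_mul, hc_def]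
      ring
    rw [Finset.sum_congr rfl fun k _ => e k, ← Finset.mul_sum]
  have hterm : ∀ i j, (if M i j = 0 then (0:ℝ) else 2 / (3 * s))
      ≤ M i j * ∑ k, y i k * y j k := by
    intro i j
    by_cases h0 : M i j = 0
    · simp [h0]
    · rw [if_neg h0, hy_inner]
      have h2 := hMP i j h0
      have e : M i j * (c i * c j * ∑ k, z i k * z j k) = c i * c j * (2 / s) := by
        rw [← h2]; ring
      rw [e]
      have h2s : (0:ℝ) < 2 / s := by positivity
      calc 2 / (3 * s) = (3:ℝ)⁻¹ * (2 / s) := by ring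
        _ ≤ c i * c j * (2 / s) := mul_le_mul_of_nonneg_right (hcc i j) h2s.le
  -- counting
  set K : SimpleGraph (Fin n) := symmDiff G H with hK_def
  have hKadj : ∀ i j, K.Adj i j ↔ M i j ≠ 0 := by
    intro i j
    rw [hK_def]
    rw [symmDiff_def]
    simp only [SimpleGraph.sup_adj, SimpleGraph.sdiff_adj]
    rw [hMval]
    by_cases hg : G.Adj i j <;> by_cases hh : H.Adj i j <;> simp [hg, hh]
  have hKedge : K.edgeSet = symmDiff G.edgeSet H.edgeSet := by
    rw [hK_def, symmDiff_def, symmDiff_def, SimpleGraph.edgeSet_sup,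
      SimpleGraph.edgeSet_sdiff, SimpleGraph.edgeSet_sdiff]
    rfl
  have hcard : ((symmDiff G.edgeSet H.edgeSet).ncard : ℝ) = (K.edgeFinset.card : ℝ) := by
    rw [← hKedge, Set.ncard_eq_toFinset_card']
    exact_mod_cast congrArg Finset.card (by ext e; simp : K.edgeSet.toFinset = K.edgeFinset)
  have hinner_count : ∀ i, (∑ j, (if M i j = 0 then (0:ℝ) else 2 / (3 * s)))
      = (2 / (3 * s)) * (K.degree i : ℝ) := by
    intro i
    have e : ∀ j, (if M i j = 0 then (0:ℝ) else 2 / (3 * s))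
        = (2 / (3 * s)) * (if K.Adj i j then (1:ℝ) else 0) := by
      intro j
      by_cases h0 : M i j = 0
      · simp [h0, (hKadj i j).not.mpr (by simp [h0])]
      · simp [h0, (hKadj i j).mpr h0]
    rw [Finset.sum_congr rfl fun j _ => e j, ← Finset.mul_sum, Finset.sum_boole]
    have : (Finset.univ.filter fun j => K.Adj i j) = K.neighborFinset i := by
      ext j; simp
    rw [this]
    rfl
  have hcount : (∑ i, ∑ j, (if M i j = 0 then (0:ℝ) else 2 / (3 * s)))
      = (2 / (3 * s)) * (2 * ((symmDiff G.edgeSet H.edgeSet).ncard : ℝ)) := by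
    rw [Finset.sum_congr rfl fun i _ => hinner_count i, ← Finset.mul_sum]
    congr 1
    rw [hcard]
    have := K.sum_degrees_eq_twice_card_edges
    exact_mod_cast this
  calc (4 / (3 * s)) * ((symmDiff G.edgeSet H.edgeSet).ncard : ℝ)
      = (2 / (3 * s)) * (2 * ((symmDiff G.edgeSet H.edgeSet).ncard : ℝ)) := by ring
    _ = ∑ i, ∑ j, (if M i j = 0 then (0:ℝ) else 2 / (3 * s)) := hcount.symm
    _ ≤ ∑ i, ∑ j, M i j * ∑ k, y i k * y j k :=
        Finset.sum_le_sum fun i _ => Finset.sum_le_sum fun j _ => hterm i j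
end

section
/- Let n ≥ 2 be even, d ≥ 1, 0 < ε ≤ 1/3, fix a bipartition of {1,…,n} into two sets of size n/2, and let f : {−1,1}^n → ℝ be any function. Then the number of simple d-regular bipartite graphs G on {1,…,n} with the fixed bipartition such that (1−ε)·xᵀL_G x ≤ f(x) ≤ (1+ε)·xᵀL_G x for all x ∈ {−1,1}^n is at most 2^(dn/2 + 9·d^(3/2)·ε·n·log₂ n). -/
open Matrix

/-- The Laplacian quadratic form `xᵀ L_G x` of a simple graph `G` on vertex set `Fin n`. -/
noncomputable def lapQuadForm {n : ℕ} (G : SimpleGraph (Fin n)) (x : Fin n → ℝ) : ℝ :=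
  letI := Classical.decRel G.Adj
  x ⬝ᵥ (G.lapMatrix ℝ *ᵥ x)

lemma lapQuadForm_eq {n : ℕ} (G : SimpleGraph (Fin n)) [inst : DecidableRel G.Adj]
    (x : Fin n → ℝ) :
    lapQuadForm G x = (∑ i, ∑ j, if G.Adj i j then (x i - x j) ^ 2 else 0) / 2 := by
  unfold lapQuadForm
  rw [← Matrix.toLinearMap₂'_apply', SimpleGraph.lapMatrix_toLinearMap₂']
  congr!

lemma degree_sum_eq {n d : ℕ} (G : SimpleGraph (Fin n)) [DecidableRel G.Adj]
    (hreg : G.IsRegularOfDegree d) :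
    ∑ i : Fin n, ∑ j : Fin n, (if G.Adj i j then (1:ℝ) else 0) = d * n := by
  have h : ∀ i : Fin n, ∑ j : Fin n, (if G.Adj i j then (1:ℝ) else 0) = d := by
    intro i
    rw [← SimpleGraph.degree_eq_sum_if_adj, hreg i]
  rw [Finset.sum_congr rfl fun i _ => h i, Finset.sum_const, Finset.card_univ,
    Fintype.card_fin, nsmul_eq_mul]
  ring

lemma pairing_qf {n d : ℕ} (L : Finset (Fin n)) (G : SimpleGraph (Fin n))
    [DecidableRel G.Adj] (hreg : G.IsRegularOfDegree d)
    (hbip : IsBipartiteWith G (↑L : Set (Fin n)))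
    (x x' : Fin n → ℝ) (hx : ∀ i, x i = 1 ∨ x i = -1)
    (hx' : ∀ i, (i ∈ L → x' i = x i) ∧ (i ∉ L → x' i = - x i)) :
    lapQuadForm G x + lapQuadForm G x' = 2 * d * n := by
  rw [lapQuadForm_eq, lapQuadForm_eq, ← add_div]
  have key : (∑ i, ∑ j, if G.Adj i j then (x i - x j) ^ 2 else 0)
      + (∑ i, ∑ j, if G.Adj i j then (x' i - x' j) ^ 2 else 0)
      = ∑ i, ∑ j, (4:ℝ) * (if G.Adj i j then 1 else 0) := by
    rw [← Finset.sum_add_distrib]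
    refine Finset.sum_congr rfl fun i _ => ?_
    rw [← Finset.sum_add_distrib]
    refine Finset.sum_congr rfl fun j _ => ?_
    by_cases h : G.Adj i j
    · rw [if_pos h, if_pos h, if_pos h]
      have hij := hbip i j h
      simp only [Finset.mem_coe] at hij
      by_cases hi : i ∈ L
      · have hj : j ∉ L := hij.mp hi
        rw [(hx' i).1 hi, (hx' j).2 hj]
        rcases hx i with h1 | h1 <;> rcases hx j with h2 | h2 <;> rw [h1, h2] <;> norm_num
      · have hj : j ∈ L := by
          by_contra hj
          exact hi (hij.mpr hj)
        rw [(hx' i).2 hi, (hx' j).1 hj]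
        rcases hx i with h1 | h1 <;> rcases hx j with h2 | h2 <;> rw [h1, h2] <;> norm_num
    · rw [if_neg h, if_neg h, if_neg h]
      norm_num
  rw [key]
  have : ∑ i, ∑ j, (4:ℝ) * (if G.Adj i j then 1 else 0)
      = 4 * ∑ i, ∑ j, (if G.Adj i j then (1:ℝ) else 0) := by
    rw [Finset.mul_sum]
    exact Finset.sum_congr rfl fun i _ => by rw [Finset.mul_sum]
  rw [this, degree_sum_eq G hreg]
  ring

lemma delta_formula {n d : ℕ} (L : Finset (Fin n)) (G H : SimpleGraph (Fin n))
    [DecidableRel G.Adj] [DecidableRel H.Adj]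
    (hGreg : G.IsRegularOfDegree d) (hHreg : H.IsRegularOfDegree d)
    (hGbip : IsBipartiteWith G (↑L : Set (Fin n)))
    (hHbip : IsBipartiteWith H (↑L : Set (Fin n)))
    (z : Fin n → ℝ) (hz : ∀ i, z i = 1 ∨ z i = -1) :
    lapQuadForm G z - lapQuadForm H z
      = -2 * ∑ u ∈ L, ∑ v ∈ Lᶜ,
          ((if G.Adj u v then (1:ℝ) else 0) - (if H.Adj u v then 1 else 0)) * z u * z v := by
  set Dm : Fin n → Fin n → ℝ :=
    fun i j => (if G.Adj i j then (1:ℝ) else 0) - (if H.Adj i j then 1 else 0) with hDm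
  have hzz : ∀ i j : Fin n, (z i - z j) ^ 2 = 2 - 2 * z i * z j := by
    intro i j
    rcases hz i with h | h <;> rcases hz j with h' | h' <;> rw [h, h'] <;> norm_num
  have hsymm : ∀ u v : Fin n, Dm v u = Dm u v := by
    intro u v
    rw [hDm]
    simp only []
    rw [if_congr (G.adj_comm v u) rfl rfl, if_congr (H.adj_comm v u) rfl rfl]
  -- vanishing of Dm inside each part
  have hvan_in : ∀ i j : Fin n, i ∈ L → j ∈ L → Dm i j = 0 := by
    intro i j hi hj
    have hg : ¬ G.Adj i j := fun h => by
      have := (hGbip i j h).mp (by simpa using hi)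
      exact this (by simpa using hj)
    have hh : ¬ H.Adj i j := fun h => by
      have := (hHbip i j h).mp (by simpa using hi)
      exact this (by simpa using hj)
    rw [hDm]
    simp [hg, hh]
  have hvan_out : ∀ i j : Fin n, i ∉ L → j ∉ L → Dm i j = 0 := by
    intro i j hi hj
    have hg : ¬ G.Adj i j := fun h => by
      have := (hGbip i j h).mpr (by simpa using hj)
      exact hi (by simpa using this)
    have hh : ¬ H.Adj i j := fun h => by
      have := (hHbip i j h).mpr (by simpa using hj)
      exact hi (by simpa using this)
    rw [hDm]
    simp [hg, hh]
  have step1 : lapQuadForm G z - lapQuadForm H z = - ∑ i, ∑ j, Dm i j * z i * z j := by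
    rw [lapQuadForm_eq, lapQuadForm_eq, div_sub_div_same, ← Finset.sum_sub_distrib]
    have h1 : ∀ i : Fin n,
        (∑ j, if G.Adj i j then (z i - z j) ^ 2 else 0)
          - (∑ j, if H.Adj i j then (z i - z j) ^ 2 else 0)
        = ∑ j, Dm i j * (2 - 2 * z i * z j) := by
      intro i
      rw [← Finset.sum_sub_distrib]
      refine Finset.sum_congr rfl fun j _ => ?_
      rw [← hzz i j, hDm]
      by_cases hg : G.Adj i j <;> by_cases hh : H.Adj i j <;> simp [hg, hh]
    rw [Finset.sum_congr rfl fun i _ => h1 i]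
    have h2 : ∑ i : Fin n, ∑ j : Fin n, Dm i j * (2 - 2 * z i * z j)
        = 2 * (∑ i, ∑ j, Dm i j) - 2 * ∑ i, ∑ j, Dm i j * z i * z j := by
      rw [Finset.mul_sum, Finset.mul_sum, ← Finset.sum_sub_distrib]
      refine Finset.sum_congr rfl fun i _ => ?_
      rw [Finset.mul_sum, Finset.mul_sum, ← Finset.sum_sub_distrib]
      refine Finset.sum_congr rfl fun j _ => ?_
      ring
    have h3 : ∑ i : Fin n, ∑ j : Fin n, Dm i j = 0 := by
      have : ∑ i : Fin n, ∑ j : Fin n, Dm i j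
          = (∑ i, ∑ j, if G.Adj i j then (1:ℝ) else 0)
            - ∑ i, ∑ j, if H.Adj i j then (1:ℝ) else 0 := by
        rw [← Finset.sum_sub_distrib]
        refine Finset.sum_congr rfl fun i _ => ?_
        rw [← Finset.sum_sub_distrib]
      rw [this, degree_sum_eq G hGreg, degree_sum_eq H hHreg]
      ring
    rw [h2, h3]
    ring
  have hsplit : ∑ i, ∑ j, Dm i j * z i * z j
      = 2 * ∑ u ∈ L, ∑ v ∈ Lᶜ, Dm u v * z u * z v := by
    rw [← Finset.sum_add_sum_compl L (fun i => ∑ j, Dm i j * z i * z j)]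
    have hinner1 : ∀ i ∈ L, ∑ j, Dm i j * z i * z j = ∑ j ∈ Lᶜ, Dm i j * z i * z j := by
      intro i hi
      rw [← Finset.sum_add_sum_compl L (fun j => Dm i j * z i * z j)]
      have hzero : ∑ j ∈ L, Dm i j * z i * z j = 0 :=
        Finset.sum_eq_zero fun j hj => by rw [hvan_in i j hi hj]; ring
      rw [hzero, zero_add]
    have hinner2 : ∀ i ∈ Lᶜ, ∑ j, Dm i j * z i * z j = ∑ j ∈ L, Dm i j * z i * z j := by
      intro i hi
      rw [← Finset.sum_add_sum_compl L (fun j => Dm i j * z i * z j)]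
      have hzero : ∑ j ∈ Lᶜ, Dm i j * z i * z j = 0 :=
        Finset.sum_eq_zero fun j hj => by
          rw [hvan_out i j (Finset.mem_compl.mp hi) (Finset.mem_compl.mp hj)]; ring
      rw [hzero, add_zero]
    rw [Finset.sum_congr rfl hinner1, Finset.sum_congr rfl hinner2]
    have hswap : ∑ i ∈ Lᶜ, ∑ j ∈ L, Dm i j * z i * z j
        = ∑ u ∈ L, ∑ v ∈ Lᶜ, Dm u v * z u * z v := by
      rw [Finset.sum_comm]
      refine Finset.sum_congr rfl fun u _ => Finset.sum_congr rfl fun v _ => ?_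
      rw [hsymm u v]
      ring
    rw [hswap]
    ring
  rw [step1, hsplit]
  ring

open Finset

noncomputable def sg (b : Bool) : ℝ := if b then 1 else -1

lemma sg_sq (b : Bool) : sg b ^ 2 = 1 := by cases b <;> simp [sg]

lemma sg_not (b : Bool) : sg (!b) = - sg b := by cases b <;> simp [sg]

lemma abs_sg (b : Bool) : |sg b| = 1 := by cases b <;> simp [sg]

variable {n : ℕ}

/-- partial Rademacher sum -/
noncomputable def Xs (s : Finset (Fin n)) (a : Fin n → ℝ) (y : Fin n → Bool) : ℝ :=
  ∑ v ∈ s, a v * sg (y v)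

lemma Xs_update {s : Finset (Fin n)} {v : Fin n} (hv : v ∉ s) (a : Fin n → ℝ)
    (y : Fin n → Bool) (b : Bool) : Xs s a (Function.update y v b) = Xs s a y := by
  unfold Xs
  refine Finset.sum_congr rfl fun w hw => ?_
  have : w ≠ v := fun h => hv (h ▸ hw)
  rw [Function.update_of_ne this]

lemma flip_vanish (v : Fin n) (F : (Fin n → Bool) → ℝ)
    (hF : ∀ y b, F (Function.update y v b) = F y) :
    ∑ y : Fin n → Bool, sg (y v) * F y = 0 := by
  have hinv : Function.Involutive (fun y : Fin n → Bool => Function.update y v (!(y v))) := by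
    intro y
    funext w
    by_cases h : w = v
    · subst h; simp [Function.update_self]
    · simp [Function.update_of_ne h]
  let e := hinv.toPerm
  have h1 : ∑ y : Fin n → Bool, sg (y v) * F y
      = ∑ y : Fin n → Bool, sg ((e y) v) * F (e y) := (Equiv.sum_comp e _).symm
  have h2 : ∀ y : Fin n → Bool, sg ((e y) v) * F (e y) = - (sg (y v) * F y) := by
    intro y
    have hev : (e y) v = !(y v) := by simp [e, Function.Involutive.toPerm]
    have : F (e y) = F y := hF y (!(y v))
    rw [hev, sg_not, this]; ring
  have key : (∑ y : Fin n → Bool, sg (y v) * F y) = - ∑ y : Fin n → Bool, sg (y v) * F y := by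
    conv_lhs => rw [h1]; simp only [h2]; rw [Finset.sum_neg_distrib]
  linarith [key]

lemma card_bool_fun : (Finset.univ : Finset (Fin n → Bool)).card = 2 ^ n := by
  rw [Finset.card_univ, Fintype.card_fun]
  simp

lemma sum_Xs_sq (a : Fin n → ℝ) (s : Finset (Fin n)) :
    ∑ y : Fin n → Bool, (Xs s a y) ^ 2 = 2 ^ n * ∑ v ∈ s, (a v) ^ 2 := by
  induction s using Finset.induction_on with
  | empty => simp [Xs]
  | insert _ _ hv =>
    rename_i v s ih
    have hins : ∀ y : Fin n → Bool, Xs (insert v s) a y = a v * sg (y v) + Xs s a y := by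
      intro y; unfold Xs; rw [Finset.sum_insert hv]
    have hexp : ∀ y : Fin n → Bool,
        (Xs (insert v s) a y) ^ 2
          = (a v) ^ 2 + 2 * a v * (sg (y v) * Xs s a y) + (Xs s a y) ^ 2 := by
      intro y
      rw [hins y]
      have h1 : sg (y v) ^ 2 = 1 := sg_sq _
      nlinarith [h1]
    calc ∑ y : Fin n → Bool, (Xs (insert v s) a y) ^ 2
        = ∑ y : Fin n → Bool,
            ((a v) ^ 2 + 2 * a v * (sg (y v) * Xs s a y) + (Xs s a y) ^ 2) := by
          exact Finset.sum_congr rfl fun y _ => hexp y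
      _ = (2:ℝ) ^ n * (a v) ^ 2 + 2 * a v * (∑ y : Fin n → Bool, sg (y v) * Xs s a y)
            + ∑ y : Fin n → Bool, (Xs s a y) ^ 2 := by
          rw [Finset.sum_add_distrib, Finset.sum_add_distrib, Finset.sum_const, ← Finset.mul_sum]
          rw [card_bool_fun]
          push_cast
          ring
      _ = 2 ^ n * ∑ w ∈ insert v s, (a w) ^ 2 := by
          rw [flip_vanish v (Xs s a) (fun y b => Xs_update hv a y b), ih,
            Finset.sum_insert hv]
          ring

lemma sum_Xs_pow4 (a : Fin n → ℝ) (s : Finset (Fin n)) :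
    ∑ y : Fin n → Bool, (Xs s a y) ^ 4 ≤ 3 * 2 ^ n * (∑ v ∈ s, (a v) ^ 2) ^ 2 := by
  induction s using Finset.induction_on with
  | empty => simp [Xs]
  | insert _ _ hv =>
    rename_i v s ih
    have hq : (0:ℝ) ≤ ∑ w ∈ s, (a w) ^ 2 := Finset.sum_nonneg fun w _ => sq_nonneg _
    have hins : ∀ y : Fin n → Bool, Xs (insert v s) a y = a v * sg (y v) + Xs s a y := by
      intro y; unfold Xs; rw [Finset.sum_insert hv]
    have hexp : ∀ y : Fin n → Bool,
        (Xs (insert v s) a y) ^ 4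
          = (a v) ^ 4 + 4 * (a v) ^ 3 * (sg (y v) * Xs s a y)
            + 6 * (a v) ^ 2 * (Xs s a y) ^ 2
            + 4 * a v * (sg (y v) * (Xs s a y) ^ 3) + (Xs s a y) ^ 4 := by
      intro y
      rw [hins y]
      have h1 : sg (y v) ^ 2 = 1 := sg_sq _
      linear_combination ((a v) ^ 4 * (sg (y v) ^ 2 + 1)
        + 4 * (a v) ^ 3 * (Xs s a y) * (sg (y v))
        + 6 * (a v) ^ 2 * (Xs s a y) ^ 2) * h1
    have hv3 : ∑ y : Fin n → Bool, sg (y v) * (Xs s a y) ^ 3 = 0 := by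
      refine flip_vanish v (fun y => (Xs s a y) ^ 3) (fun y b => ?_)
      show Xs s a (Function.update y v b) ^ 3 = Xs s a y ^ 3
      rw [Xs_update hv a y b]
    have hv1 : ∑ y : Fin n → Bool, sg (y v) * Xs s a y = 0 :=
      flip_vanish v (Xs s a) (fun y b => Xs_update hv a y b)
    have hsq := sum_Xs_sq a s
    calc ∑ y : Fin n → Bool, (Xs (insert v s) a y) ^ 4
        = ∑ y : Fin n → Bool,
            ((a v) ^ 4 + 4 * (a v) ^ 3 * (sg (y v) * Xs s a y)
              + 6 * (a v) ^ 2 * (Xs s a y) ^ 2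
              + 4 * a v * (sg (y v) * (Xs s a y) ^ 3) + (Xs s a y) ^ 4) :=
          Finset.sum_congr rfl fun y _ => hexp y
      _ = (2:ℝ) ^ n * (a v) ^ 4 + 6 * (a v) ^ 2 * (2 ^ n * ∑ w ∈ s, (a w) ^ 2)
            + ∑ y : Fin n → Bool, (Xs s a y) ^ 4 := by
          rw [Finset.sum_add_distrib, Finset.sum_add_distrib, Finset.sum_add_distrib,
            Finset.sum_add_distrib, Finset.sum_const, ← Finset.mul_sum, ← Finset.mul_sum,
            ← Finset.mul_sum, hv1, hv3, card_bool_fun, hsq]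
          push_cast
          ring
      _ ≤ 3 * 2 ^ n * (∑ w ∈ insert v s, (a w) ^ 2) ^ 2 := by
          rw [Finset.sum_insert hv]
          have h2n : (0:ℝ) < 2 ^ n := by positivity
          nlinarith [ih, mul_nonneg (le_of_lt h2n) (by positivity : (0:ℝ) ≤ (a v) ^ 4)]

lemma khintchine (a : Fin n → ℝ) (d : ℕ) (hd : 1 ≤ d)
    (hq2 : ∑ v, (a v) ^ 2 ≤ 2 * d) :
    2 ^ n * (∑ v, (a v) ^ 2) / Real.sqrt (6 * d)
      ≤ ∑ y : Fin n → Bool, |Xs Finset.univ a y| := by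
  set q : ℝ := ∑ v, (a v) ^ 2 with hqdef
  have hq0 : 0 ≤ q := Finset.sum_nonneg fun v _ => sq_nonneg _
  set B : ℝ := ∑ y : Fin n → Bool, |Xs Finset.univ a y| with hBdef
  have hB0 : 0 ≤ B := Finset.sum_nonneg fun y _ => abs_nonneg _
  have hd0 : (0:ℝ) < d := by exact_mod_cast Nat.lt_of_lt_of_le Nat.zero_lt_one hd
  have hsd : (0:ℝ) < Real.sqrt (6 * d) := Real.sqrt_pos.2 (by linarith)
  rcases eq_or_lt_of_le hq0 with h0 | hqpos
  · rw [← h0]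
    simpa using hB0
  have hA : ∑ y : Fin n → Bool, (Xs Finset.univ a y) ^ 2 = 2 ^ n * q := sum_Xs_sq a _
  have hC : ∑ y : Fin n → Bool, (Xs Finset.univ a y) ^ 4 ≤ 3 * 2 ^ n * q ^ 2 := sum_Xs_pow4 a _
  set C : ℝ := ∑ y : Fin n → Bool, (Xs Finset.univ a y) ^ 4 with hCdef
  set S3 : ℝ := ∑ y : Fin n → Bool, |Xs Finset.univ a y| ^ 3 with hS3def
  have h1 : ((2:ℝ) ^ n * q) ^ 2 ≤ B * S3 := by
    rw [← hA, hBdef, hS3def]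
    refine Finset.sum_sq_le_sum_mul_sum_of_sq_eq_mul _ (fun y _ => abs_nonneg _)
      (fun y _ => by positivity) (fun y _ => ?_)
    have h4 : |Xs Finset.univ a y| ^ 4 = (Xs Finset.univ a y) ^ 4 := by
      rw [← abs_pow]; exact abs_of_nonneg (by positivity)
    linear_combination -h4
  have h2 : S3 ^ 2 ≤ ((2:ℝ) ^ n * q) * C := by
    rw [← hA, hS3def, hCdef]
    refine Finset.sum_sq_le_sum_mul_sum_of_sq_eq_mul _ (fun y _ => sq_nonneg _)
      (fun y _ => by positivity) (fun y _ => ?_)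
    have h6 : |Xs Finset.univ a y| ^ 6 = (Xs Finset.univ a y) ^ 6 := by
      rw [← abs_pow]; exact abs_of_nonneg (by positivity)
    linear_combination h6
  have hA0 : (0:ℝ) < 2 ^ n * q := by positivity
  have hmain : ((2:ℝ) ^ n) ^ 2 * q ≤ 3 * B ^ 2 := by
    have step1 : ((((2:ℝ) ^ n * q) ^ 2)) ^ 2 ≤ (B * S3) ^ 2 := pow_le_pow_left₀ (sq_nonneg _) h1 2
    have step2 : B ^ 2 * S3 ^ 2 ≤ B ^ 2 * (((2:ℝ) ^ n * q) * C) :=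
      mul_le_mul_of_nonneg_left h2 (sq_nonneg B)
    have step3 : B ^ 2 * (((2:ℝ) ^ n * q) * C)
        ≤ B ^ 2 * (((2:ℝ) ^ n * q) * (3 * 2 ^ n * q ^ 2)) := by
      refine mul_le_mul_of_nonneg_left ?_ (sq_nonneg B)
      exact mul_le_mul_of_nonneg_left hC (le_of_lt hA0)
    have hdiv : (0:ℝ) < ((2:ℝ) ^ n) ^ 2 * q ^ 3 := by positivity
    refine le_of_mul_le_mul_right ?_ hdiv
    calc ((2:ℝ) ^ n) ^ 2 * q * (((2:ℝ) ^ n) ^ 2 * q ^ 3)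
        = (((2:ℝ) ^ n * q) ^ 2) ^ 2 := by ring
      _ ≤ (B * S3) ^ 2 := step1
      _ = B ^ 2 * S3 ^ 2 := by ring
      _ ≤ B ^ 2 * (((2:ℝ) ^ n * q) * C) := step2
      _ ≤ B ^ 2 * (((2:ℝ) ^ n * q) * (3 * 2 ^ n * q ^ 2)) := step3
      _ = 3 * B ^ 2 * (((2:ℝ) ^ n) ^ 2 * q ^ 3) := by ring
  rw [div_le_iff₀ hsd]
  have hsq : Real.sqrt (6 * d) ^ 2 = 6 * d := Real.sq_sqrt (by positivity)
  have h8 : ((2:ℝ) ^ n) ^ 2 * q * q ≤ 3 * B ^ 2 * q := mul_le_mul_of_nonneg_right hmain hq0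
  have h9 : 3 * B ^ 2 * q ≤ 3 * B ^ 2 * (2 * d) :=
    mul_le_mul_of_nonneg_left hq2 (by positivity)
  have hgoal2 : ((2:ℝ) ^ n * q) ^ 2 ≤ (B * Real.sqrt (6 * d)) ^ 2 := by
    calc ((2:ℝ) ^ n * q) ^ 2 = ((2:ℝ) ^ n) ^ 2 * q * q := by ring
      _ ≤ 3 * B ^ 2 * (2 * d) := le_trans h8 h9
      _ = (B * Real.sqrt (6 * d)) ^ 2 := by rw [mul_pow, hsq]; ring
  have hBs : 0 ≤ B * Real.sqrt (6 * d) := mul_nonneg hB0 (le_of_lt hsd)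
  nlinarith [hgoal2, hBs, hA0]

lemma pair_bound {n d : ℕ} {ε : ℝ} (hd : 1 ≤ d) (hε : 0 < ε)
    (L : Finset (Fin n)) (G H : SimpleGraph (Fin n))
    [DecidableRel G.Adj] [DecidableRel H.Adj]
    (hGreg : G.IsRegularOfDegree d) (hHreg : H.IsRegularOfDegree d)
    (hGbip : IsBipartiteWith G (↑L : Set (Fin n)))
    (hHbip : IsBipartiteWith H (↑L : Set (Fin n)))
    (hcons : ∀ x : Fin n → ℝ, (∀ i, x i = 1 ∨ x i = -1) →
        |lapQuadForm G x - lapQuadForm H x|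
          ≤ ε * (lapQuadForm G x + lapQuadForm H x)) :
    ∑ u ∈ L, ∑ v ∈ Lᶜ,
        ((if G.Adj u v then (1:ℝ) else 0) - (if H.Adj u v then 1 else 0)) ^ 2
      ≤ Real.sqrt 6 * ε * (d:ℝ) ^ ((3:ℝ)/2) * n := by
  set Dm : Fin n → Fin n → ℝ :=
    fun i j => (if G.Adj i j then (1:ℝ) else 0) - (if H.Adj i j then 1 else 0) with hDm
  set m : ℝ := ∑ u ∈ L, ∑ v ∈ Lᶜ, Dm u v ^ 2 with hm
  set A : Fin n → Fin n → ℝ := fun u v => if v ∈ L then 0 else Dm u v with hA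
  have hq_eq : ∀ u : Fin n, ∑ v, (A u v) ^ 2 = ∑ v ∈ Lᶜ, Dm u v ^ 2 := by
    intro u
    rw [← Finset.sum_add_sum_compl L (fun v => (A u v) ^ 2)]
    have h1 : ∑ v ∈ L, (A u v) ^ 2 = 0 := Finset.sum_eq_zero fun v hv => by simp [hA, hv]
    have h2 : ∑ v ∈ Lᶜ, (A u v) ^ 2 = ∑ v ∈ Lᶜ, Dm u v ^ 2 :=
      Finset.sum_congr rfl fun v hv => by simp [hA, Finset.mem_compl.mp hv]
    rw [h1, h2, zero_add]
  have hq_le : ∀ u : Fin n, ∑ v, (A u v) ^ 2 ≤ 2 * d := by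
    intro u
    rw [hq_eq u]
    have hpt : ∀ v ∈ Lᶜ, Dm u v ^ 2
        ≤ (if G.Adj u v then (1:ℝ) else 0) + (if H.Adj u v then 1 else 0) := by
      intro v _
      by_cases hg : G.Adj u v <;> by_cases hh : H.Adj u v <;> simp [hDm, hg, hh] <;> norm_num
    calc ∑ v ∈ Lᶜ, Dm u v ^ 2
        ≤ ∑ v ∈ Lᶜ, ((if G.Adj u v then (1:ℝ) else 0) + (if H.Adj u v then 1 else 0)) :=
          Finset.sum_le_sum hpt
      _ ≤ ∑ v, ((if G.Adj u v then (1:ℝ) else 0) + (if H.Adj u v then 1 else 0)) :=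
          Finset.sum_le_sum_of_subset_of_nonneg (Finset.subset_univ _)
            (fun v _ _ => by positivity)
      _ = 2 * d := by
          rw [Finset.sum_add_distrib, ← SimpleGraph.degree_eq_sum_if_adj,
            ← SimpleGraph.degree_eq_sum_if_adj, hGreg u, hHreg u]
          ring
  have hd0 : (0:ℝ) < d := by exact_mod_cast Nat.lt_of_lt_of_le Nat.zero_lt_one hd
  have hsd : (0:ℝ) < Real.sqrt (6 * d) := Real.sqrt_pos.2 (by linarith)
  have hsum : 2 ^ n * (m / Real.sqrt (6 * d))
      ≤ ∑ y : Fin n → Bool, ∑ u ∈ L, |Xs Finset.univ (A u) y| := by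
    rw [Finset.sum_comm]
    have heq : 2 ^ n * (m / Real.sqrt (6 * d))
        = ∑ u ∈ L, 2 ^ n * (∑ v, (A u v) ^ 2) / Real.sqrt (6 * d) := by
      have hstep : ∑ u ∈ L, 2 ^ n * (∑ v, (A u v) ^ 2) / Real.sqrt (6 * d)
          = ∑ u ∈ L, 2 ^ n * (∑ v ∈ Lᶜ, Dm u v ^ 2) / Real.sqrt (6 * d) :=
        Finset.sum_congr rfl fun u _ => by rw [hq_eq u]
      rw [hstep, hm, Finset.sum_div, Finset.mul_sum]
      exact Finset.sum_congr rfl fun u _ => by ring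
    rw [heq]
    exact Finset.sum_le_sum fun u _ => khintchine (A u) d hd (hq_le u)
  obtain ⟨y₀, -, hy₀⟩ : ∃ y ∈ (Finset.univ : Finset (Fin n → Bool)),
      m / Real.sqrt (6 * d) ≤ ∑ u ∈ L, |Xs Finset.univ (A u) y| := by
    apply Finset.exists_le_of_sum_le Finset.univ_nonempty
    rw [Finset.sum_const, card_bool_fun, nsmul_eq_mul]
    calc ((2 ^ n : ℕ) : ℝ) * (m / Real.sqrt (6 * d))
        = 2 ^ n * (m / Real.sqrt (6 * d)) := by push_cast; ring
      _ ≤ _ := hsum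
  set su : Fin n → ℝ := fun u => Xs Finset.univ (A u) y₀ with hsu
  set x : Fin n → ℝ :=
    fun i => if i ∈ L then (if 0 ≤ su i then -1 else 1) else sg (y₀ i) with hx
  set x' : Fin n → ℝ :=
    fun i => if i ∈ L then (if 0 ≤ su i then -1 else 1) else - sg (y₀ i) with hx'
  have hxpm : ∀ i, x i = 1 ∨ x i = -1 := by
    intro i
    by_cases hi : i ∈ L
    · by_cases hs : 0 ≤ su i <;> simp [hx, hi, hs]
    · cases hyi : y₀ i <;> simp [hx, hi, sg, hyi]
  have hx'pm : ∀ i, x' i = 1 ∨ x' i = -1 := by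
    intro i
    by_cases hi : i ∈ L
    · by_cases hs : 0 ≤ su i <;> simp [hx', hi, hs]
    · cases hyi : y₀ i <;> simp [hx', hi, sg, hyi]
  have hrel : ∀ i, (i ∈ L → x' i = x i) ∧ (i ∉ L → x' i = - x i) := by
    intro i
    constructor <;> intro hi <;> simp [hx, hx', hi]
  have hsu_eq : ∀ u, su u = ∑ v ∈ Lᶜ, Dm u v * sg (y₀ v) := by
    intro u
    show Xs Finset.univ (A u) y₀ = _
    unfold Xs
    rw [← Finset.sum_add_sum_compl L (fun v => A u v * sg (y₀ v))]
    have h1 : ∑ v ∈ L, A u v * sg (y₀ v) = 0 :=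
      Finset.sum_eq_zero fun v hv => by simp [hA, hv]
    have h2 : ∑ v ∈ Lᶜ, A u v * sg (y₀ v) = ∑ v ∈ Lᶜ, Dm u v * sg (y₀ v) :=
      Finset.sum_congr rfl fun v hv => by simp [hA, Finset.mem_compl.mp hv]
    rw [h1, h2, zero_add]
  have habs : ∀ u ∈ L, x u * su u = -|su u| := by
    intro u hu
    have hxu : x u = if 0 ≤ su u then -1 else 1 := by simp [hx, hu]
    by_cases hs : 0 ≤ su u
    · rw [hxu, if_pos hs, abs_of_nonneg hs]; ring
    · push_neg at hs
      rw [hxu, if_neg (not_le.mpr hs), abs_of_neg hs]; ring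
  have hDx : lapQuadForm G x - lapQuadForm H x = 2 * ∑ u ∈ L, |su u| := by
    rw [delta_formula L G H hGreg hHreg hGbip hHbip x hxpm]
    have hin : ∀ u ∈ L, ∑ v ∈ Lᶜ, Dm u v * x u * x v = -|su u| := by
      intro u hu
      have h1 : ∑ v ∈ Lᶜ, Dm u v * x u * x v = x u * ∑ v ∈ Lᶜ, Dm u v * sg (y₀ v) := by
        rw [Finset.mul_sum]
        refine Finset.sum_congr rfl fun v hv => ?_
        have hv' : v ∉ L := Finset.mem_compl.mp hv
        have hxv : x v = sg (y₀ v) := by simp [hx, hv']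
        rw [hxv]; ring
      rw [h1, ← hsu_eq u, habs u hu]
    rw [Finset.sum_congr rfl hin, Finset.sum_neg_distrib]
    ring
  have hDx' : lapQuadForm G x' - lapQuadForm H x' = -(2 * ∑ u ∈ L, |su u|) := by
    rw [delta_formula L G H hGreg hHreg hGbip hHbip x' hx'pm]
    have hin : ∀ u ∈ L, ∑ v ∈ Lᶜ, Dm u v * x' u * x' v = |su u| := by
      intro u hu
      have h1 : ∑ v ∈ Lᶜ, Dm u v * x' u * x' v
          = ∑ v ∈ Lᶜ, -(x u * (Dm u v * sg (y₀ v))) := by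
        refine Finset.sum_congr rfl fun v hv => ?_
        have hv' : v ∉ L := Finset.mem_compl.mp hv
        have hxv : x' v = - sg (y₀ v) := by simp [hx', hv']
        have hxu : x' u = x u := (hrel u).1 hu
        rw [hxv, hxu]; ring
      rw [h1, Finset.sum_neg_distrib, ← Finset.mul_sum, ← hsu_eq u, habs u hu, neg_neg]
    rw [Finset.sum_congr rfl hin]
    ring
  have hb1 := hcons x hxpm
  have hb2 := hcons x' hx'pm
  have hp1 : lapQuadForm G x + lapQuadForm G x' = 2 * d * n :=
    pairing_qf L G hGreg hGbip x x' hxpm hrel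
  have hp2 : lapQuadForm H x + lapQuadForm H x' = 2 * d * n :=
    pairing_qf L H hHreg hHbip x x' hxpm hrel
  have hS : ∑ u ∈ L, |su u| ≤ ε * (d * n) := by
    have e1 : 2 * ∑ u ∈ L, |su u| ≤ ε * (lapQuadForm G x + lapQuadForm H x) := by
      rw [← hDx]; exact le_trans (le_abs_self _) hb1
    have e2 : 2 * ∑ u ∈ L, |su u| ≤ ε * (lapQuadForm G x' + lapQuadForm H x') := by
      have h3 : 2 * ∑ u ∈ L, |su u| = -(lapQuadForm G x' - lapQuadForm H x') := by
        rw [hDx']; ring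
      rw [h3]
      exact le_trans (neg_le_abs _) hb2
    have hadd := add_le_add e1 e2
    have h4 : ε * (lapQuadForm G x + lapQuadForm H x)
        + ε * (lapQuadForm G x' + lapQuadForm H x') = ε * (4 * (d * n)) := by
      rw [← mul_add]
      congr 1
      linarith [hp1, hp2]
    rw [h4] at hadd
    linarith [hadd]
  have hfin : m / Real.sqrt (6 * d) ≤ ε * (d * n) := le_trans hy₀ hS
  rw [div_le_iff₀ hsd] at hfin
  have hsdeq : Real.sqrt (6 * d) = Real.sqrt 6 * Real.sqrt d := Real.sqrt_mul (by norm_num) _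
  have hd32 : (d:ℝ) ^ ((3:ℝ)/2) = d * Real.sqrt d := by
    have h32 : ((3:ℝ)/2) = 1 + 1/2 := by norm_num
    rw [h32, Real.rpow_add hd0, Real.rpow_one, Real.sqrt_eq_rpow]
  calc m ≤ ε * (d * n) * Real.sqrt (6 * d) := hfin
    _ = Real.sqrt 6 * ε * ((d:ℝ) * Real.sqrt d) * n := by rw [hsdeq]; ring
    _ = Real.sqrt 6 * ε * (d:ℝ) ^ ((3:ℝ)/2) * n := by rw [hd32]

noncomputable def diffSet {n : ℕ} (L : Finset (Fin n)) (G H : SimpleGraph (Fin n)) :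
    Finset (Fin n × Fin n) :=
  letI := Classical.decRel G.Adj
  letI := Classical.decRel H.Adj
  (L ×ˢ Lᶜ).filter (fun p => ¬ (G.Adj p.1 p.2 ↔ H.Adj p.1 p.2))

lemma mem_diffSet {n : ℕ} (L : Finset (Fin n)) (G H : SimpleGraph (Fin n))
    (p : Fin n × Fin n) :
    p ∈ diffSet L G H ↔ p.1 ∈ L ∧ p.2 ∈ Lᶜ ∧ ¬ (G.Adj p.1 p.2 ↔ H.Adj p.1 p.2) := by
  unfold diffSet
  simp [Finset.mem_filter, Finset.mem_product, and_assoc]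

lemma diffSet_subset {n : ℕ} (L : Finset (Fin n)) (G H : SimpleGraph (Fin n)) :
    diffSet L G H ⊆ L ×ˢ Lᶜ := by
  intro p hp
  rw [mem_diffSet] at hp
  rw [Finset.mem_product]
  exact ⟨hp.1, hp.2.1⟩

lemma diffSet_inj {n : ℕ} (L : Finset (Fin n)) (G H1 H2 : SimpleGraph (Fin n))
    (h1 : IsBipartiteWith H1 (↑L : Set (Fin n))) (h2 : IsBipartiteWith H2 (↑L : Set (Fin n)))
    (h : diffSet L G H1 = diffSet L G H2) : H1 = H2 := by
  ext u v
  have key : ∀ u v : Fin n, u ∈ L → v ∉ L → (H1.Adj u v ↔ H2.Adj u v) := by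
    intro u v hu hv
    have e1 := mem_diffSet L G H1 (u, v)
    have e2 := mem_diffSet L G H2 (u, v)
    rw [h] at e1
    rw [e2] at e1
    simp only [Finset.mem_compl] at e1
    tauto
  by_cases hu : u ∈ L <;> by_cases hv : v ∈ L
  · constructor <;> intro hadj
    · exact absurd ((h1 u v hadj).mp (by simpa using hu)) (by simpa using hv)
    · exact absurd ((h2 u v hadj).mp (by simpa using hu)) (by simpa using hv)
  · exact key u v hu hv
  · rw [H1.adj_comm, H2.adj_comm]
    exact key v u hv hu
  · constructor <;> intro hadj
    · exact absurd ((h1 u v hadj).mpr (by simpa using hv)) (by simpa using hu)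
    · exact absurd ((h2 u v hadj).mpr (by simpa using hv)) (by simpa using hu)

lemma diffSet_card_le {n d : ℕ} {ε : ℝ} (hd : 1 ≤ d) (hε : 0 < ε)
    (L : Finset (Fin n)) (G H : SimpleGraph (Fin n))
    (hGreg : IsRegOfDeg G d) (hHreg : IsRegOfDeg H d)
    (hGbip : IsBipartiteWith G (↑L : Set (Fin n)))
    (hHbip : IsBipartiteWith H (↑L : Set (Fin n)))
    (hcons : ∀ x : Fin n → ℝ, (∀ i, x i = 1 ∨ x i = -1) →
        |lapQuadForm G x - lapQuadForm H x|
          ≤ ε * (lapQuadForm G x + lapQuadForm H x)) :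
    ((diffSet L G H).card : ℝ) ≤ Real.sqrt 6 * ε * (d:ℝ) ^ ((3:ℝ)/2) * n := by
  letI := Classical.decRel G.Adj
  letI := Classical.decRel H.Adj
  have hcard : ((diffSet L G H).card : ℝ)
      = ∑ u ∈ L, ∑ v ∈ Lᶜ,
          ((if G.Adj u v then (1:ℝ) else 0) - (if H.Adj u v then 1 else 0)) ^ 2 := by
    rw [← Finset.sum_product']
    unfold diffSet
    rw [← Finset.sum_boole]
    refine Finset.sum_congr rfl fun p _ => ?_
    by_cases hg : G.Adj p.1 p.2 <;> by_cases hh : H.Adj p.1 p.2 <;>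
      simp [hg, hh] <;> norm_num
  rw [hcard]
  exact pair_bound hd hε L G H hGreg hHreg hGbip hHbip hcons

lemma count_small_subsets {α : Type*} [DecidableEq α] (P : Finset α) (K : ℕ) :
    ((P.powerset.filter (fun A => A.card ≤ K)).card) ≤ (P.card + 1) ^ K := by
  have hsub : P.powerset.filter (fun A => A.card ≤ K)
      ⊆ (Finset.range (K + 1)).biUnion (fun k => Finset.powersetCard k P) := by
    intro A hA
    rw [Finset.mem_filter, Finset.mem_powerset] at hA
    rw [Finset.mem_biUnion]
    exact ⟨A.card, Finset.mem_range.mpr (Nat.lt_succ_of_le hA.2),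
      Finset.mem_powersetCard.mpr ⟨hA.1, rfl⟩⟩
  calc (P.powerset.filter (fun A => A.card ≤ K)).card
      ≤ ((Finset.range (K + 1)).biUnion (fun k => Finset.powersetCard k P)).card :=
        Finset.card_le_card hsub
    _ ≤ ∑ k ∈ Finset.range (K + 1), (Finset.powersetCard k P).card := Finset.card_biUnion_le
    _ = ∑ k ∈ Finset.range (K + 1), P.card.choose k :=
        Finset.sum_congr rfl fun k _ => Finset.card_powersetCard k P
    _ ≤ ∑ k ∈ Finset.range (K + 1), P.card ^ k :=
        Finset.sum_le_sum fun k _ => Nat.choose_le_pow _ _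
    _ ≤ ∑ k ∈ Finset.range (K + 1), P.card ^ k * K.choose k :=
        Finset.sum_le_sum fun k hk => Nat.le_mul_of_pos_right _
          (Nat.choose_pos (Nat.lt_succ_iff.mp (Finset.mem_range.mp hk)))
    _ = (P.card + 1) ^ K := by
        rw [add_pow]
        exact Finset.sum_congr rfl fun k _ => by simp

/-- Any fixed function `f : {-1,1}ⁿ → ℝ` is an `ε`-cut sketch of at most
`2^(dn/2 + 9d^(3/2)εn log₂ n)` simple `d`-regular bipartite graphs on `n` labelled vertices
with a fixed balanced bipartition. -/
theorem cut_sketch_count (n d : ℕ) (hn : 2 ≤ n) (hneven : Even n) (hd : 1 ≤ d)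
    (ε : ℝ) (hε : 0 < ε) (hε' : ε ≤ 1 / 3)
    (L : Finset (Fin n)) (hL : L.card = n / 2)
    (f : (Fin n → ℝ) → ℝ) :
    ((Set.ncard {G : SimpleGraph (Fin n) | IsRegOfDeg G d ∧
        IsBipartiteWith G (↑L : Set (Fin n)) ∧
        ∀ x : Fin n → ℝ, (∀ i, x i = 1 ∨ x i = -1) →
          (1 - ε) * lapQuadForm G x ≤ f x ∧ f x ≤ (1 + ε) * lapQuadForm G x}) : ℝ) ≤
      2 ^ ((d : ℝ) * n / 2 + 9 * (d : ℝ) ^ ((3 : ℝ) / 2) * ε * n * Real.logb 2 n) := by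
  classical
  set S : Set (SimpleGraph (Fin n)) := {G : SimpleGraph (Fin n) | IsRegOfDeg G d ∧
        IsBipartiteWith G (↑L : Set (Fin n)) ∧
        ∀ x : Fin n → ℝ, (∀ i, x i = 1 ∨ x i = -1) →
          (1 - ε) * lapQuadForm G x ≤ f x ∧ f x ≤ (1 + ε) * lapQuadForm G x} with hS
  have hrhs0 : (0:ℝ) ≤ 2 ^ ((d : ℝ) * n / 2 + 9 * (d : ℝ) ^ ((3 : ℝ) / 2) * ε * n
      * Real.logb 2 n) := le_of_lt (Real.rpow_pos_of_pos (by norm_num) _)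
  rcases Set.eq_empty_or_nonempty S with hemp | ⟨G₀, hG₀⟩
  · rw [hemp]
    simpa using hrhs0
  obtain ⟨hG₀reg, hG₀bip, hG₀f⟩ := hG₀
  have hd0 : (0:ℝ) < d := by exact_mod_cast Nat.lt_of_lt_of_le Nat.zero_lt_one hd
  set K : ℝ := Real.sqrt 6 * ε * (d:ℝ) ^ ((3:ℝ)/2) * n with hK
  have hd320 : (0:ℝ) ≤ (d:ℝ) ^ ((3:ℝ)/2) := Real.rpow_nonneg (le_of_lt hd0) _
  have hK0 : 0 ≤ K := by
    rw [hK]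
    have := Real.sqrt_nonneg (6:ℝ)
    positivity
  set K' : ℕ := ⌊K⌋₊ with hK'
  set T : Finset (Finset (Fin n × Fin n)) :=
    (L ×ˢ Lᶜ).powerset.filter (fun A => A.card ≤ K') with hT
  have himg : (fun H => diffSet L G₀ H) '' S ⊆ ↑T := by
    rintro _ ⟨H, hH, rfl⟩
    obtain ⟨hHreg, hHbip, hHf⟩ := hH
    have hcons : ∀ x : Fin n → ℝ, (∀ i, x i = 1 ∨ x i = -1) →
        |lapQuadForm G₀ x - lapQuadForm H x|
          ≤ ε * (lapQuadForm G₀ x + lapQuadForm H x) := by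
      intro x hx
      obtain ⟨hg1, hg2⟩ := hG₀f x hx
      obtain ⟨hh1, hh2⟩ := hHf x hx
      rw [abs_le]
      constructor <;> linarith
    have hcard := diffSet_card_le hd hε L G₀ H hG₀reg hHreg hG₀bip hHbip hcons
    rw [Finset.mem_coe, hT, Finset.mem_filter, Finset.mem_powerset]
    exact ⟨diffSet_subset L G₀ H, Nat.le_floor hcard⟩
  have hinj : Set.InjOn (fun H => diffSet L G₀ H) S := by
    intro H1 h1 H2 h2 heq
    exact diffSet_inj L G₀ H1 H2 h1.2.1 h2.2.1 heq
  have hcount : S.ncard ≤ T.card := by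
    rw [← Set.ncard_image_of_injOn hinj, ← Set.ncard_coe_finset T]
    exact Set.ncard_le_ncard himg (Finset.finite_toSet T)
  have hM : (L ×ˢ Lᶜ).card + 1 ≤ n ^ 2 := by
    rw [Finset.card_product, Finset.card_compl, Fintype.card_fin, hL]
    obtain ⟨k, rfl⟩ : ∃ k, n = k + 2 := ⟨n - 2, by omega⟩
    have ha : (k + 2) / 2 ≤ k + 1 := by omega
    have hb : (k + 2) - (k + 2) / 2 ≤ k + 1 := by omega
    have hmul := Nat.mul_le_mul ha hb
    nlinarith [hmul]
  have hTcard : T.card ≤ (n ^ 2) ^ K' := by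
    calc T.card ≤ ((L ×ˢ Lᶜ).card + 1) ^ K' := count_small_subsets _ _
      _ ≤ (n ^ 2) ^ K' := Nat.pow_le_pow_left hM _
  -- pass to the reals
  have hn1 : (1:ℝ) ≤ (n:ℝ) := by exact_mod_cast Nat.one_le_of_lt hn
  have hn0 : (0:ℝ) < (n:ℝ) := lt_of_lt_of_le one_pos hn1
  have hlogn : 0 ≤ Real.logb 2 n := Real.logb_nonneg (by norm_num) hn1
  have hpow : ((n:ℝ) ^ 2) ^ (K' : ℝ)
      ≤ 2 ^ ((d : ℝ) * n / 2 + 9 * (d : ℝ) ^ ((3 : ℝ) / 2) * ε * n * Real.logb 2 n) := by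
    have hbase : ((n:ℝ) ^ 2) = (2:ℝ) ^ (Real.logb 2 ((n:ℝ) ^ 2)) :=
      (Real.rpow_logb (by norm_num) (by norm_num) (by positivity)).symm
    rw [hbase, ← Real.rpow_mul (by norm_num : (0:ℝ) ≤ 2)]
    apply Real.rpow_le_rpow_of_exponent_le (by norm_num)
    have hlog2 : Real.logb 2 ((n:ℝ) ^ 2) = 2 * Real.logb 2 n := by
      rw [Real.logb_pow]
      push_cast
      ring
    rw [hlog2]
    have hK'K : (K' : ℝ) ≤ K := Nat.floor_le hK0
    have hsqrt6 : Real.sqrt 6 ≤ 3 := by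
      rw [show (6:ℝ) = 6 from rfl]
      calc Real.sqrt 6 ≤ Real.sqrt 9 := Real.sqrt_le_sqrt (by norm_num)
        _ = 3 := by
            rw [show (9:ℝ) = 3 ^ 2 by norm_num]
            exact Real.sqrt_sq (by norm_num)
    have hprod0 : 0 ≤ ε * (d:ℝ) ^ ((3:ℝ)/2) * (n:ℝ) * Real.logb 2 n := by positivity
    have hKle : K * Real.logb 2 n ≤ 3 * (ε * (d:ℝ) ^ ((3:ℝ)/2) * (n:ℝ) * Real.logb 2 n) := by
      rw [hK]
      nlinarith [hsqrt6, hprod0, Real.sqrt_nonneg (6:ℝ)]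
    have hdn0 : 0 ≤ (d:ℝ) * n / 2 := by positivity
    have hchain : 2 * Real.logb 2 n * (K' : ℝ) ≤ 6 * (ε * (d:ℝ) ^ ((3:ℝ)/2) * (n:ℝ)
        * Real.logb 2 n) := by
      have h1 : 2 * Real.logb 2 n * (K' : ℝ) ≤ 2 * Real.logb 2 n * K := by
        have : 0 ≤ 2 * Real.logb 2 n := by positivity
        exact mul_le_mul_of_nonneg_left hK'K this
      nlinarith [hKle, hlogn]
    nlinarith [hchain, hdn0, hprod0]
  calc (S.ncard : ℝ) ≤ (T.card : ℝ) := by exact_mod_cast hcount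
    _ ≤ (((n ^ 2) ^ K' : ℕ) : ℝ) := by exact_mod_cast hTcard
    _ = ((n:ℝ) ^ 2) ^ (K' : ℝ) := by
        push_cast
        rw [Real.rpow_natCast]
    _ ≤ _ := hpow
end

section
/- Let n ≥ 2 be even, d ≥ 1, 0 < ε ≤ 1/3, fix a bipartition of {1,…,n} into two sets of size n/2, and let B_{n,d} denote the set of simple d-regular bipartite graphs on {1,…,n} with that bipartition. If ℱ is a family of functions from {−1,1}^n to ℝ such that every G ∈ B_{n,d} has some f ∈ ℱ with (1−ε)·xᵀL_G x ≤ f(x) ≤ (1+ε)·xᵀL_G x for all x ∈ {−1,1}^n, then |ℱ| ≥ |B_{n,d}| / 2^(dn/2 + 9·d^(3/2)·ε·n·log₂ n). -/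
open Matrix

namespace CSFLB

open Finset

def sg (b : Bool) : ℝ := if b then 1 else -1

lemma sg_sq (b : Bool) : sg b ^ 2 = 1 := by cases b <;> simp [sg]

lemma sg_cases (b : Bool) : sg b = 1 ∨ sg b = -1 := by cases b <;> simp [sg]

lemma sum_cons_form (N : ℕ) (c : Fin (N+1) → ℝ) (h : Bool) (t : Fin N → Bool) :
    (∑ v, c v * sg (Fin.cons (α := fun _ => Bool) h t v))
      = c 0 * sg h + ∑ v : Fin N, c v.succ * sg (t v) := by
  rw [Fin.sum_univ_succ]
  simp

lemma rad2 : ∀ (N : ℕ) (c : Fin N → ℝ),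
    ∑ b : Fin N → Bool, (∑ v, c v * sg (b v)) ^ 2 = 2 ^ N * ∑ v, (c v) ^ 2 := by
  intro N
  induction N with
  | zero => intro c; simp
  | succ N ih =>
    intro c
    rw [← Equiv.sum_comp (Fin.consEquiv (fun _ : Fin (N+1) => Bool))
      (fun b => (∑ v, c v * sg (b v)) ^ 2), Fintype.sum_prod_type]
    have hform : ∀ (h : Bool) (t : Fin N → Bool),
        (∑ v, c v * sg ((Fin.consEquiv (fun _ : Fin (N+1) => Bool)) (h, t) v))
          = c 0 * sg h + ∑ v : Fin N, c v.succ * sg (t v) := by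
      intro h t
      exact sum_cons_form N c h t
    simp only [hform]
    rw [Fintype.sum_bool]
    have hsg1 : sg true = 1 := rfl
    have hsg2 : sg false = -1 := rfl
    rw [hsg1, hsg2, ← Finset.sum_add_distrib]
    have e1 : ∀ t : Fin N → Bool,
        (c 0 * 1 + ∑ v : Fin N, c v.succ * sg (t v)) ^ 2
        + (c 0 * (-1) + ∑ v : Fin N, c v.succ * sg (t v)) ^ 2
        = 2 * (∑ v : Fin N, c v.succ * sg (t v)) ^ 2 + 2 * (c 0) ^ 2 := by
      intro t; ring
    rw [Finset.sum_congr rfl (fun t _ => e1 t), Finset.sum_add_distrib,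
      ← Finset.mul_sum, ih (fun v => c v.succ), Finset.sum_const, Fin.sum_univ_succ]
    simp only [Finset.card_univ, Fintype.card_fun, Fintype.card_bool, Fintype.card_fin,
      nsmul_eq_mul]
    push_cast
    ring

lemma rad4 : ∀ (N : ℕ) (c : Fin N → ℝ),
    ∑ b : Fin N → Bool, (∑ v, c v * sg (b v)) ^ 4 ≤ 3 * (2 ^ N * (∑ v, (c v) ^ 2) ^ 2) := by
  intro N
  induction N with
  | zero => intro c; norm_num
  | succ N ih =>
    intro c
    rw [← Equiv.sum_comp (Fin.consEquiv (fun _ : Fin (N+1) => Bool))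
      (fun b => (∑ v, c v * sg (b v)) ^ 4), Fintype.sum_prod_type]
    have hform : ∀ (h : Bool) (t : Fin N → Bool),
        (∑ v, c v * sg ((Fin.consEquiv (fun _ : Fin (N+1) => Bool)) (h, t) v))
          = c 0 * sg h + ∑ v : Fin N, c v.succ * sg (t v) := by
      intro h t
      exact sum_cons_form N c h t
    simp only [hform]
    rw [Fintype.sum_bool]
    have hsg1 : sg true = 1 := rfl
    have hsg2 : sg false = -1 := rfl
    rw [hsg1, hsg2, ← Finset.sum_add_distrib]
    have e1 : ∀ t : Fin N → Bool,
        (c 0 * 1 + ∑ v : Fin N, c v.succ * sg (t v)) ^ 4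
        + (c 0 * (-1) + ∑ v : Fin N, c v.succ * sg (t v)) ^ 4
        = 2 * (∑ v : Fin N, c v.succ * sg (t v)) ^ 4
          + 12 * (c 0) ^ 2 * (∑ v : Fin N, c v.succ * sg (t v)) ^ 2
          + 2 * (c 0) ^ 4 := by
      intro t; ring
    rw [Finset.sum_congr rfl (fun t _ => e1 t), Finset.sum_add_distrib,
      Finset.sum_add_distrib, ← Finset.mul_sum, ← Finset.mul_sum,
      rad2 N (fun v => c v.succ), Finset.sum_const]
    have h4 := ih (fun v => c v.succ)
    have hS : (0:ℝ) ≤ ∑ v : Fin N, (c v.succ) ^ 2 :=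
      Finset.sum_nonneg fun i _ => sq_nonneg _
    have hcard : (Finset.univ : Finset (Fin N → Bool)).card = 2 ^ N := by
      simp [Finset.card_univ]
    rw [hcard, Fin.sum_univ_succ]
    have h2N : (0:ℝ) < 2 ^ N := by positivity
    set S := ∑ v : Fin N, (c v.succ) ^ 2 with hSdef
    set S4 := ∑ t : Fin N → Bool, (∑ v : Fin N, c v.succ * sg (t v)) ^ 4 with hS4def
    simp only [nsmul_eq_mul]
    push_cast
    have hpow : (2:ℝ) ^ (N+1) = 2 * 2 ^ N := by ring
    rw [hpow]
    nlinarith [sq_nonneg (c 0), sq_nonneg S, mul_nonneg (sq_nonneg (c 0)) hS,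
      mul_nonneg (le_of_lt h2N) (mul_nonneg (sq_nonneg (c 0)) (sq_nonneg (c 0))),
      mul_nonneg (le_of_lt h2N) (mul_nonneg (sq_nonneg (c 0)) hS)]

lemma rad1 (N : ℕ) (c : Fin N → ℝ) :
    2 ^ N * Real.sqrt ((∑ v, (c v) ^ 2) / 3) ≤ ∑ b : Fin N → Bool, |∑ v, c v * sg (b v)| := by
  set s := ∑ v, (c v) ^ 2 with hsdef
  have hs0 : 0 ≤ s := Finset.sum_nonneg fun i _ => sq_nonneg _
  set X : (Fin N → Bool) → ℝ := fun b => ∑ v, c v * sg (b v) with hXdef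
  set S1 := ∑ b : Fin N → Bool, |X b| with hS1def
  set S2 := ∑ b : Fin N → Bool, (X b) ^ 2 with hS2def
  set S3 := ∑ b : Fin N → Bool, |X b| * (X b) ^ 2 with hS3def
  set S4 := ∑ b : Fin N → Bool, (X b) ^ 4 with hS4def
  have hS2 : S2 = 2 ^ N * s := rad2 N c
  have hS4 : S4 ≤ 3 * (2 ^ N * s ^ 2) := rad4 N c
  have hS1nn : 0 ≤ S1 := Finset.sum_nonneg fun b _ => abs_nonneg _
  have hS3nn : 0 ≤ S3 :=
    Finset.sum_nonneg fun b _ => mul_nonneg (abs_nonneg _) (sq_nonneg _)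
  rcases eq_or_lt_of_le hs0 with hseq | hspos
  · rw [← hseq]
    simpa using hS1nn
  -- Cauchy–Schwarz 1 : S2 ^ 2 ≤ S1 * S3
  have cs1 : S2 ^ 2 ≤ S1 * S3 := by
    have := Finset.sum_mul_sq_le_sq_mul_sq Finset.univ
      (fun b => Real.sqrt |X b|) (fun b => Real.sqrt |X b| * |X b|)
    have h1 : ∀ b : Fin N → Bool,
        Real.sqrt |X b| * (Real.sqrt |X b| * |X b|) = (X b) ^ 2 := by
      intro b
      rw [← mul_assoc, Real.mul_self_sqrt (abs_nonneg _), ← abs_mul]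
      rw [abs_of_nonneg (mul_self_nonneg _), ← sq]
    have h2 : ∀ b : Fin N → Bool, (Real.sqrt |X b|) ^ 2 = |X b| :=
      fun b => Real.sq_sqrt (abs_nonneg _)
    have h3 : ∀ b : Fin N → Bool, (Real.sqrt |X b| * |X b|) ^ 2 = |X b| * (X b) ^ 2 := by
      intro b
      rw [mul_pow, Real.sq_sqrt (abs_nonneg _), sq_abs]
    calc S2 ^ 2 = (∑ b : Fin N → Bool, Real.sqrt |X b| * (Real.sqrt |X b| * |X b|)) ^ 2 := by
          rw [Finset.sum_congr rfl fun b _ => h1 b]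
      _ ≤ (∑ b : Fin N → Bool, (Real.sqrt |X b|) ^ 2)
            * ∑ b : Fin N → Bool, (Real.sqrt |X b| * |X b|) ^ 2 := this
      _ = S1 * S3 := by
          rw [Finset.sum_congr rfl fun b _ => h2 b, Finset.sum_congr rfl fun b _ => h3 b]
  -- Cauchy–Schwarz 2 : S3 ^ 2 ≤ S2 * S4
  have cs2 : S3 ^ 2 ≤ S2 * S4 := by
    have := Finset.sum_mul_sq_le_sq_mul_sq Finset.univ
      (fun b => |X b|) (fun b => (X b) ^ 2)
    have h2 : ∀ b : Fin N → Bool, |X b| ^ 2 = (X b) ^ 2 := fun b => sq_abs _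
    have h4 : ∀ b : Fin N → Bool, ((X b) ^ 2) ^ 2 = (X b) ^ 4 := by
      intro b; ring
    calc S3 ^ 2 ≤ (∑ b : Fin N → Bool, |X b| ^ 2) * ∑ b : Fin N → Bool, ((X b) ^ 2) ^ 2 := this
      _ = S2 * S4 := by
          rw [Finset.sum_congr rfl fun b _ => h2 b, Finset.sum_congr rfl fun b _ => h4 b]
  have h2N : (0:ℝ) < 2 ^ N := by positivity
  have hS2pos : 0 < S2 := by rw [hS2]; positivity
  have hS3pos : 0 < S3 := by
    rcases eq_or_lt_of_le hS3nn with h | h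
    · exfalso
      have : S2 ^ 2 ≤ 0 := by rw [← h] at cs1; simpa using cs1
      nlinarith
    · exact h
  -- S3 ≤ 2^N * s * sqrt (3 * s)
  have hS3le : S3 ≤ 2 ^ N * s * Real.sqrt (3 * s) := by
    have h1 : S3 ≤ Real.sqrt (S2 * S4) := by
      rw [← Real.sqrt_sq hS3nn]
      exact Real.sqrt_le_sqrt cs2
    have h2 : S2 * S4 ≤ (2 ^ N * s * Real.sqrt (3 * s)) ^ 2 := by
      have : (2 ^ N * s * Real.sqrt (3 * s)) ^ 2 = (2 ^ N * s) * (3 * (2 ^ N * s ^ 2)) := by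
        rw [mul_pow, mul_pow, Real.sq_sqrt (by positivity)]
        ring
      rw [this, hS2]
      have h4nn : 0 ≤ (2:ℝ) ^ N * s := by positivity
      exact mul_le_mul_of_nonneg_left hS4 h4nn
    calc S3 ≤ Real.sqrt (S2 * S4) := h1
      _ ≤ Real.sqrt ((2 ^ N * s * Real.sqrt (3 * s)) ^ 2) := Real.sqrt_le_sqrt h2
      _ = 2 ^ N * s * Real.sqrt (3 * s) := Real.sqrt_sq (by positivity)
  -- key product identity : sqrt(s/3) * sqrt(3*s) = s
  have hprod : Real.sqrt (s / 3) * Real.sqrt (3 * s) = s := by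
    rw [← Real.sqrt_mul (by positivity)]
    have : s / 3 * (3 * s) = s ^ 2 := by ring
    rw [this, Real.sqrt_sq hs0]
  -- conclude
  rw [← mul_le_mul_iff_of_pos_right hS3pos]
  calc 2 ^ N * Real.sqrt (s / 3) * S3
      ≤ 2 ^ N * Real.sqrt (s / 3) * (2 ^ N * s * Real.sqrt (3 * s)) := by
        apply mul_le_mul_of_nonneg_left hS3le (by positivity)
    _ = (2:ℝ) ^ (2 * N) * s * (Real.sqrt (s / 3) * Real.sqrt (3 * s)) := by
        rw [two_mul, pow_add]; ring
    _ = (2:ℝ) ^ (2 * N) * s ^ 2 := by rw [hprod]; ring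
    _ = S2 ^ 2 := by rw [hS2, two_mul, pow_add]; ring
    _ ≤ S1 * S3 := cs1
section Quad

variable {n d : ℕ}

/-- adjacency indicator as a real number (classical). -/
noncomputable def aij (G : SimpleGraph (Fin n)) (i j : Fin n) : ℝ :=
  letI := Classical.decRel G.Adj
  if G.Adj i j then 1 else 0

lemma aij_nonneg (G : SimpleGraph (Fin n)) (i j : Fin n) : 0 ≤ aij G i j := by
  unfold aij; split <;> norm_num

lemma aij_le_one (G : SimpleGraph (Fin n)) (i j : Fin n) : aij G i j ≤ 1 := by
  unfold aij; split <;> norm_num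

lemma aij_symm (G : SimpleGraph (Fin n)) (i j : Fin n) : aij G i j = aij G j i := by
  unfold aij
  by_cases h : G.Adj i j
  · rw [if_pos h, if_pos h.symm]
  · rw [if_neg h, if_neg fun h' => h h'.symm]

lemma aij_self (G : SimpleGraph (Fin n)) (i : Fin n) : aij G i i = 0 := by
  unfold aij; rw [if_neg (G.loopless.irrefl i)]

lemma aij_eq_one_of_adj {G : SimpleGraph (Fin n)} {i j : Fin n} (h : G.Adj i j) :
    aij G i j = 1 := by
  unfold aij; exact if_pos h

lemma aij_eq_zero_of_not_adj {G : SimpleGraph (Fin n)} {i j : Fin n} (h : ¬G.Adj i j) :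
    aij G i j = 0 := by
  unfold aij; exact if_neg h

/-- row sums of the adjacency indicator equal `d` for a `d`-regular graph. -/
lemma sum_aij {G : SimpleGraph (Fin n)} (hreg : IsRegOfDeg G d) (i : Fin n) :
    ∑ j, aij G i j = d := by
  letI := Classical.decRel G.Adj
  have h := G.degree_eq_sum_if_adj (R := ℝ) i
  unfold IsRegOfDeg at hreg
  rw [hreg i] at h
  unfold aij
  exact h.symm

/-- the fundamental formula for the Laplacian quadratic form at a `±1` vector. -/
lemma lqf_eq (G : SimpleGraph (Fin n)) (x : Fin n → ℝ) (hx : ∀ i, x i = 1 ∨ x i = -1) :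
    lapQuadForm G x = ∑ i, ∑ j, aij G i j * (1 - x i * x j) := by
  letI := Classical.decRel G.Adj
  have h := G.lapMatrix_toLinearMap₂' (R := ℝ) x
  rw [Matrix.toLinearMap₂'_apply'] at h
  unfold lapQuadForm
  rw [h, Finset.sum_div]
  apply Finset.sum_congr rfl
  intro i _
  rw [Finset.sum_div]
  apply Finset.sum_congr rfl
  intro j _
  have hxi2 : x i ^ 2 = 1 := by rcases hx i with h' | h' <;> rw [h'] <;> norm_num
  have hxj2 : x j ^ 2 = 1 := by rcases hx j with h' | h' <;> rw [h'] <;> norm_num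
  by_cases hadj : G.Adj i j
  · rw [if_pos hadj, aij_eq_one_of_adj hadj]
    nlinarith [hxi2, hxj2]
  · rw [if_neg hadj, aij_eq_zero_of_not_adj hadj]
    norm_num

lemma lqf_nonneg {G : SimpleGraph (Fin n)} {x : Fin n → ℝ} (hx : ∀ i, x i = 1 ∨ x i = -1) :
    0 ≤ lapQuadForm G x := by
  rw [lqf_eq G x hx]
  apply Finset.sum_nonneg; intro i _
  apply Finset.sum_nonneg; intro j _
  apply mul_nonneg (aij_nonneg _ _ _)
  have : x i * x j ≤ 1 := by
    rcases hx i with h | h <;> rcases hx j with h' | h' <;> rw [h, h'] <;> norm_num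
  linarith

lemma lqf_le {G : SimpleGraph (Fin n)} (hreg : IsRegOfDeg G d) {x : Fin n → ℝ}
    (hx : ∀ i, x i = 1 ∨ x i = -1) :
    lapQuadForm G x ≤ 2 * d * n := by
  rw [lqf_eq G x hx]
  have h1 : ∀ i : Fin n, ∑ j, aij G i j * (1 - x i * x j) ≤ 2 * d := by
    intro i
    have : ∀ j : Fin n, aij G i j * (1 - x i * x j) ≤ 2 * aij G i j := by
      intro j
      have hge : -1 ≤ x i * x j := by
        rcases hx i with h | h <;> rcases hx j with h' | h' <;> rw [h, h'] <;> norm_num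
      nlinarith [aij_nonneg G i j]
    calc ∑ j, aij G i j * (1 - x i * x j) ≤ ∑ j, 2 * aij G i j :=
          Finset.sum_le_sum fun j _ => this j
      _ = 2 * d := by rw [← Finset.mul_sum, sum_aij hreg i]
  calc (∑ i, ∑ j, aij G i j * (1 - x i * x j)) ≤ ∑ _i : Fin n, 2 * (d:ℝ) :=
        Finset.sum_le_sum fun i _ => h1 i
    _ = 2 * d * n := by rw [Finset.sum_const]; simp [Finset.card_univ]; ring

/-- difference of quadratic forms of two `d`-regular graphs at a `±1` vector. -/
lemma lqf_sub {G H : SimpleGraph (Fin n)} (hG : IsRegOfDeg G d) (hH : IsRegOfDeg H d)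
    {x : Fin n → ℝ} (hx : ∀ i, x i = 1 ∨ x i = -1) :
    lapQuadForm G x - lapQuadForm H x
      = ∑ i, ∑ j, (aij H i j - aij G i j) * (x i * x j) := by
  rw [lqf_eq G x hx, lqf_eq H x hx]
  rw [← Finset.sum_sub_distrib]
  simp_rw [← Finset.sum_sub_distrib]
  have : ∀ i j : Fin n, aij G i j * (1 - x i * x j) - aij H i j * (1 - x i * x j)
      = (aij G i j - aij H i j) + (aij H i j - aij G i j) * (x i * x j) := by
    intro i j; ring
  simp_rw [this, Finset.sum_add_distrib]
  have hrow : ∀ i : Fin n, ∑ j, (aij G i j - aij H i j) = 0 := by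
    intro i
    rw [Finset.sum_sub_distrib, sum_aij hG i, sum_aij hH i, sub_self]
  rw [Finset.sum_congr rfl fun i _ => hrow i]
  simp

end Quad



section RegimeA

variable {n d : ℕ}

/-- the sketch predicate. -/
def Sk (ε : ℝ) (f : (Fin n → ℝ) → ℝ) (G : SimpleGraph (Fin n)) : Prop :=
  ∀ x : Fin n → ℝ, (∀ i, x i = 1 ∨ x i = -1) →
    (1 - ε) * lapQuadForm G x ≤ f x ∧ f x ≤ (1 + ε) * lapQuadForm G x

lemma sum_pair_ite {u v : Fin n} (hne : u ≠ v) (h : Fin n → ℝ) :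
    ∑ j, (if j = u ∨ j = v then h j else 0) = h u + h v := by
  have heq : ∀ j, (if j = u ∨ j = v then h j else 0)
      = if j ∈ ({u, v} : Finset (Fin n)) then h j else 0 := by
    intro j
    by_cases hj : j = u ∨ j = v
    · rw [if_pos hj, if_pos (by simp [hj])]
    · rw [if_neg hj, if_neg (by simpa using hj)]
  simp_rw [heq]
  rw [Finset.sum_ite_mem, Finset.univ_inter, Finset.sum_pair hne]

lemma pm_one_vec (u v : Fin n) :
    ∀ i, (fun i => if i = u ∨ i = v then (1:ℝ) else -1) i = 1
      ∨ (fun i => if i = u ∨ i = v then (1:ℝ) else -1) i = -1 := by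
  intro i
  by_cases h : i = u ∨ i = v
  · left; simp only [if_pos h]
  · right; simp only [if_neg h]

lemma quad_pair {G : SimpleGraph (Fin n)} (hreg : IsRegOfDeg G d) {u v : Fin n}
    (hne : u ≠ v) :
    lapQuadForm G (fun i => if i = u ∨ i = v then 1 else -1)
      = 8 * (d - aij G u v) := by
  have hx := pm_one_vec u v
  rw [lqf_eq G _ hx]
  set χ : Fin n → ℝ := fun i => if i = u ∨ i = v then 1 else 0 with hχdef
  have hxχ : ∀ i : Fin n, (if i = u ∨ i = v then (1:ℝ) else -1) = 2 * χ i - 1 := by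
    intro i
    rw [hχdef]
    by_cases h : i = u ∨ i = v
    · simp only [if_pos h]; norm_num
    · simp only [if_neg h]; norm_num
  have hterm : ∀ i j : Fin n,
      aij G i j * (1 - (if i = u ∨ i = v then (1:ℝ) else -1)
        * (if j = u ∨ j = v then (1:ℝ) else -1))
      = 2 * (χ i * aij G i j) + 2 * (aij G i j * χ j)
        - 4 * (χ i * (aij G i j * χ j)) := by
    intro i j; rw [hxχ i, hxχ j]; ring
  rw [Finset.sum_congr rfl fun i _ => Finset.sum_congr rfl fun j _ => hterm i j]
  rw [Finset.sum_congr rfl fun i _ => Finset.sum_sub_distrib _ _,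
    Finset.sum_congr rfl fun i _ => congrArg₂ (· - ·) Finset.sum_add_distrib rfl,
    Finset.sum_sub_distrib, Finset.sum_add_distrib]
  have hcol : ∀ j : Fin n, ∑ i, aij G i j = d := by
    intro j
    rw [Finset.sum_congr rfl fun i _ => aij_symm G i j]
    exact sum_aij hreg j
  have hχsum : ∑ i, χ i = 2 := by
    rw [hχdef, sum_pair_ite hne (fun _ => (1:ℝ))]
    norm_num
  have hT1 : ∑ i, ∑ j, 2 * (χ i * aij G i j) = 4 * d := by
    have h1 : ∀ i : Fin n, ∑ j, 2 * (χ i * aij G i j) = 2 * d * χ i := by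
      intro i
      rw [← Finset.mul_sum, ← Finset.mul_sum, sum_aij hreg i]
      ring
    rw [Finset.sum_congr rfl fun i _ => h1 i, ← Finset.mul_sum, hχsum]
    ring
  have hT2 : ∑ i, ∑ j, 2 * (aij G i j * χ j) = 4 * d := by
    rw [Finset.sum_comm]
    have h1 : ∀ j : Fin n, ∑ i, 2 * (aij G i j * χ j) = 2 * d * χ j := by
      intro j
      have h2 : ∀ i : Fin n, 2 * (aij G i j * χ j) = 2 * χ j * aij G i j := by
        intro i; ring
      rw [Finset.sum_congr rfl fun i _ => h2 i, ← Finset.mul_sum, hcol j]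
      ring
    rw [Finset.sum_congr rfl fun j _ => h1 j, ← Finset.mul_sum, hχsum]
    ring
  have hrowχ : ∀ i : Fin n, ∑ j, aij G i j * χ j = aij G i u + aij G i v := by
    intro i
    have h2 : ∀ j : Fin n, aij G i j * χ j = if j = u ∨ j = v then aij G i j else 0 := by
      intro j
      simp only [hχdef]
      by_cases hj : j = u ∨ j = v
      · rw [if_pos hj, if_pos hj, mul_one]
      · rw [if_neg hj, if_neg hj, mul_zero]
    rw [Finset.sum_congr rfl fun j _ => h2 j]
    exact sum_pair_ite hne _
  have hT3 : ∑ i, ∑ j, 4 * (χ i * (aij G i j * χ j)) = 8 * aij G u v := by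
    have hrow : ∀ i : Fin n, ∑ j, 4 * (χ i * (aij G i j * χ j))
        = 4 * (χ i * (aij G i u + aij G i v)) := by
      intro i
      rw [← Finset.mul_sum, ← Finset.mul_sum, hrowχ i]
    rw [Finset.sum_congr rfl fun i _ => hrow i]
    have h3 : ∀ i : Fin n, 4 * (χ i * (aij G i u + aij G i v))
        = if i = u ∨ i = v then 4 * (aij G i u + aij G i v) else 0 := by
      intro i
      simp only [hχdef]
      by_cases hi : i = u ∨ i = v
      · rw [if_pos hi, if_pos hi]; ring
      · rw [if_neg hi, if_neg hi]; ring
    rw [Finset.sum_congr rfl fun i _ => h3 i, sum_pair_ite hne _]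
    rw [aij_self, aij_self, aij_symm G v u]
    ring
  rw [hT1, hT2, hT3]
  ring

lemma sk_core {ε : ℝ} {f : (Fin n → ℝ) → ℝ} {G H : SimpleGraph (Fin n)}
    (hG : IsRegOfDeg G d) (hH : IsRegOfDeg H d)
    (hfG : Sk ε f G) (hfH : Sk ε f H) (hlt : ε * (2 * d - 1) < 1)
    {u v : Fin n} (hadj : G.Adj u v) (hnadj : ¬H.Adj u v) : False := by
  have hne : u ≠ v := G.ne_of_adj hadj
  have hx := pm_one_vec u v
  have hQG : lapQuadForm G (fun i => if i = u ∨ i = v then 1 else -1) = 8 * ((d:ℝ) - 1) := by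
    rw [quad_pair hG hne, aij_eq_one_of_adj hadj]
  have hQH : lapQuadForm H (fun i => if i = u ∨ i = v then 1 else -1) = 8 * (d:ℝ) := by
    rw [quad_pair hH hne, aij_eq_zero_of_not_adj hnadj]
    ring
  have h1 := (hfG _ hx).2
  have h2 := (hfH _ hx).1
  rw [hQG] at h1
  rw [hQH] at h2
  nlinarith [h1, h2, hlt]

lemma sk_inj {ε : ℝ} {f : (Fin n → ℝ) → ℝ} {G H : SimpleGraph (Fin n)}
    (hG : IsRegOfDeg G d) (hH : IsRegOfDeg H d)
    (hfG : Sk ε f G) (hfH : Sk ε f H) (hlt : ε * (2 * d - 1) < 1) : G = H := by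
  by_contra hne
  have hex : ∃ u v, (G.Adj u v ∧ ¬H.Adj u v) ∨ (H.Adj u v ∧ ¬G.Adj u v) := by
    by_contra hq
    push_neg at hq
    apply hne
    ext u v
    have h1 := hq u v
    tauto
  obtain ⟨u, v, hcase⟩ := hex
  rcases hcase with ⟨h1, h2⟩ | ⟨h1, h2⟩
  · exact sk_core hG hH hfG hfH hlt h1 h2
  · exact sk_core hH hG hfH hfG hlt h1 h2

end RegimeA




section Pair

variable {n d : ℕ}

lemma aij_zero_same {G : SimpleGraph (Fin n)} {L : Finset (Fin n)}
    (hGb : IsBipartiteWith G (↑L : Set (Fin n))) {u v : Fin n}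
    (h : u ∈ L ↔ v ∈ L) : aij G u v = 0 := by
  apply aij_eq_zero_of_not_adj
  intro hadj
  have h2 := hGb u v hadj
  simp only [Finset.mem_coe] at h2
  tauto

lemma key_pair {ε : ℝ} (hε : 0 < ε) {f : (Fin n → ℝ) → ℝ} {G H : SimpleGraph (Fin n)}
    {L : Finset (Fin n)}
    (hG : IsRegOfDeg G d) (hH : IsRegOfDeg H d)
    (hGb : IsBipartiteWith G (↑L : Set (Fin n))) (hHb : IsBipartiteWith H (↑L : Set (Fin n)))
    (hfG : Sk ε f G) (hfH : Sk ε f H) :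
    ∑ u ∈ L, ∑ v, (aij H u v - aij G u v) ^ 2 ≤ 2 * ε * d * n * Real.sqrt (6 * d) := by
  classical
  set M : Fin n → Fin n → ℝ := fun i j => aij H i j - aij G i j with hMdef
  have hMsymm : ∀ i j, M i j = M j i := by
    intro i j; simp only [hMdef]; rw [aij_symm H i j, aij_symm G i j]
  have hMzero : ∀ i j, (i ∈ L ↔ j ∈ L) → M i j = 0 := by
    intro i j h
    simp only [hMdef]
    rw [aij_zero_same hHb h, aij_zero_same hGb h, sub_self]
  set s : Fin n → ℝ := fun u => ∑ v, (M u v) ^ 2 with hsdef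
  have hs0 : ∀ u, 0 ≤ s u := fun u => Finset.sum_nonneg fun v _ => sq_nonneg _
  have hs2d : ∀ u, s u ≤ 2 * d := by
    intro u
    have h1 : ∀ v, (M u v) ^ 2 ≤ aij H u v + aij G u v := by
      intro v
      have hH2 : aij H u v ^ 2 = aij H u v := by
        unfold aij; split <;> norm_num
      have hG2 : aij G u v ^ 2 = aij G u v := by
        unfold aij; split <;> norm_num
      have hnn := mul_nonneg (aij_nonneg H u v) (aij_nonneg G u v)
      simp only [hMdef]
      nlinarith [hH2, hG2]
    calc s u ≤ ∑ v, (aij H u v + aij G u v) := Finset.sum_le_sum fun v _ => h1 v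
      _ = 2 * d := by
        rw [Finset.sum_add_distrib, sum_aij hH u, sum_aij hG u]; ring
  have havg : ∃ b₀ : Fin n → Bool,
      ∑ u ∈ L, Real.sqrt (s u / 3) ≤ ∑ u ∈ L, |∑ v, M u v * sg (b₀ v)| := by
    by_contra hcon
    push_neg at hcon
    have hlt : ∑ b : Fin n → Bool, ∑ u ∈ L, |∑ v, M u v * sg (b v)|
        < ∑ b : Fin n → Bool, ∑ u ∈ L, Real.sqrt (s u / 3) := by
      apply Finset.sum_lt_sum_of_nonempty
      · exact Finset.univ_nonempty
      · intro b _; exact hcon b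
    rw [Finset.sum_comm] at hlt
    have h1 : ∑ u ∈ L, (2:ℝ) ^ n * Real.sqrt (s u / 3)
        ≤ ∑ u ∈ L, ∑ b : Fin n → Bool, |∑ v, M u v * sg (b v)| :=
      Finset.sum_le_sum fun u _ => rad1 n (fun v => M u v)
    have h2 : ∑ b : Fin n → Bool, ∑ u ∈ L, Real.sqrt (s u / 3)
        = ∑ u ∈ L, (2:ℝ) ^ n * Real.sqrt (s u / 3) := by
      have hcard : Fintype.card (Fin n → Bool) = 2 ^ n := by simp
      rw [Finset.sum_const, Finset.card_univ, hcard, nsmul_eq_mul, Finset.mul_sum]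
      push_cast
      rfl
    rw [h2] at hlt
    linarith
  obtain ⟨b₀, hb₀⟩ := havg
  set X : Fin n → ℝ := fun u => ∑ v, M u v * sg (b₀ v) with hXdef
  set x : Fin n → ℝ := fun i => if i ∈ L then (if 0 ≤ X i then 1 else -1) else sg (b₀ i)
    with hxdef
  have hx : ∀ i, x i = 1 ∨ x i = -1 := by
    intro i; simp only [hxdef]
    by_cases hiL : i ∈ L
    · rw [if_pos hiL]
      by_cases h0 : 0 ≤ X i
      · left; rw [if_pos h0]
      · right; rw [if_neg h0]
    · rw [if_neg hiL]; exact sg_cases _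
  have hxout : ∀ i, i ∉ L → x i = sg (b₀ i) := by
    intro i h; simp only [hxdef, if_neg h]
  have hxin : ∀ i, i ∈ L → x i * X i = |X i| := by
    intro i h
    simp only [hxdef, if_pos h]
    by_cases h0 : 0 ≤ X i
    · rw [if_pos h0, one_mul, abs_of_nonneg h0]
    · rw [if_neg h0, abs_of_neg (lt_of_not_ge h0)]; ring
  have hrow : ∀ u, u ∈ L → ∑ j, M u j * x j = X u := by
    intro u hu
    simp only [hXdef]
    apply Finset.sum_congr rfl
    intro j _
    by_cases hj : j ∈ L
    · rw [hMzero u j (by tauto), zero_mul, zero_mul]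
    · rw [hxout j hj]
  have hT : ∑ i, ∑ j, M i j * (x i * x j) = 2 * ∑ u ∈ L, |X u| := by
    have hinner : ∀ i : Fin n, ∑ j, M i j * (x i * x j) = x i * ∑ j, M i j * x j := by
      intro i; rw [Finset.mul_sum]; apply Finset.sum_congr rfl; intro j _; ring
    rw [Finset.sum_congr rfl fun i _ => hinner i,
      ← Finset.sum_add_sum_compl L (fun i => x i * ∑ j, M i j * x j)]
    have hpart1 : ∑ i ∈ L, x i * ∑ j, M i j * x j = ∑ u ∈ L, |X u| := by
      apply Finset.sum_congr rfl
      intro i hi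
      rw [hrow i hi, hxin i hi]
    have hpart2 : ∑ i ∈ Lᶜ, x i * ∑ j, M i j * x j = ∑ u ∈ L, |X u| := by
      have hinner2 : ∀ i ∈ Lᶜ, x i * ∑ j, M i j * x j = ∑ j ∈ L, M i j * (x i * x j) := by
        intro i hi
        rw [Finset.mem_compl] at hi
        have hz : ∑ j ∈ Lᶜ, M i j * x j = 0 := by
          apply Finset.sum_eq_zero
          intro j hj
          rw [Finset.mem_compl] at hj
          rw [hMzero i j (by tauto), zero_mul]
        have hful : ∑ j, M i j * x j = ∑ j ∈ L, M i j * x j := by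
          rw [← Finset.sum_add_sum_compl L (fun j => M i j * x j), hz, add_zero]
        rw [hful, Finset.mul_sum]
        apply Finset.sum_congr rfl; intro j _; ring
      rw [Finset.sum_congr rfl hinner2, Finset.sum_comm]
      apply Finset.sum_congr rfl
      intro j hj
      have hswap : ∑ i ∈ Lᶜ, M i j * (x i * x j) = x j * ∑ i ∈ Lᶜ, M j i * x i := by
        rw [Finset.mul_sum]
        apply Finset.sum_congr rfl
        intro i _
        rw [hMsymm i j]; ring
      rw [hswap]
      have hzl : ∑ i ∈ L, M j i * x i = 0 := by
        apply Finset.sum_eq_zero; intro i hi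
        rw [hMzero j i (by tauto), zero_mul]
      have h4 := Finset.sum_add_sum_compl L (fun i => M j i * x i)
      rw [hzl, zero_add] at h4
      rw [h4, hrow j hj, hxin j hj]
    rw [hpart1, hpart2]; ring
  -- bound via the sketch property
  have hQGle := lqf_le hG hx
  have hQHle := lqf_le hH hx
  have hQG0 : 0 ≤ lapQuadForm G x := lqf_nonneg hx
  have hQH0 : 0 ≤ lapQuadForm H x := lqf_nonneg hx
  have hsub := lqf_sub hG hH hx
  have hfG' := hfG x hx
  have hfH' := hfH x hx
  have hXle : ∑ u ∈ L, |X u| ≤ 2 * ε * d * n := by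
    have hTQ : lapQuadForm G x - lapQuadForm H x = 2 * ∑ u ∈ L, |X u| := by
      rw [hsub]
      exact hT
    nlinarith [hfG'.1, hfH'.2, hQGle, hQHle, hQG0, hQH0, hε.le]
  have hper : ∀ u, s u ≤ Real.sqrt (s u / 3) * Real.sqrt (6 * d) := by
    intro u
    have h1 : Real.sqrt (s u / 3) * Real.sqrt (6 * d) = Real.sqrt (2 * d * s u) := by
      rw [← Real.sqrt_mul (by positivity : (0:ℝ) ≤ s u / 3)]
      congr 1
      ring
    rw [h1]
    have h2 : s u * s u ≤ 2 * d * s u :=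
      mul_le_mul_of_nonneg_right (hs2d u) (hs0 u)
    calc s u = Real.sqrt (s u * s u) := by rw [Real.sqrt_mul_self (hs0 u)]
      _ ≤ Real.sqrt (2 * d * s u) := Real.sqrt_le_sqrt h2
  have hchain : ∑ u ∈ L, s u ≤ (2 * ε * d * n) * Real.sqrt (6 * d) := by
    calc ∑ u ∈ L, s u ≤ ∑ u ∈ L, Real.sqrt (s u / 3) * Real.sqrt (6 * d) :=
          Finset.sum_le_sum fun u _ => hper u
      _ = (∑ u ∈ L, Real.sqrt (s u / 3)) * Real.sqrt (6 * d) := by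
          rw [Finset.sum_mul]
      _ ≤ (2 * ε * d * n) * Real.sqrt (6 * d) := by
          apply mul_le_mul_of_nonneg_right _ (Real.sqrt_nonneg _)
          linarith [hb₀, hXle]
  calc ∑ u ∈ L, ∑ v, (aij H u v - aij G u v) ^ 2 = ∑ u ∈ L, s u := rfl
    _ ≤ (2 * ε * d * n) * Real.sqrt (6 * d) := hchain
    _ = 2 * ε * d * n * Real.sqrt (6 * d) := by ring

end Pair


section DiffCard

variable {n d : ℕ}

/-- edge finset with a canonical (classical) instance. -/
noncomputable def eF (G : SimpleGraph (Fin n)) : Finset (Sym2 (Fin n)) :=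
  letI := Classical.decRel G.Adj
  G.edgeFinset

lemma eF_inj {G H : SimpleGraph (Fin n)} (h : eF G = eF H) : G = H := by
  letI := Classical.decRel G.Adj
  letI := Classical.decRel H.Adj
  unfold eF at h
  exact SimpleGraph.edgeFinset_inj.mp h



lemma diff_card_le {ε : ℝ} (hε : 0 < ε) {f : (Fin n → ℝ) → ℝ} {G H : SimpleGraph (Fin n)}
    {L : Finset (Fin n)}
    (hG : IsRegOfDeg G d) (hH : IsRegOfDeg H d)
    (hGb : IsBipartiteWith G (↑L : Set (Fin n))) (hHb : IsBipartiteWith H (↑L : Set (Fin n)))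
    (hfG : Sk ε f G) (hfH : Sk ε f H) :
    ((eF H \ eF G).card : ℝ) ≤ ε * d * n * Real.sqrt (6 * d) := by
  letI := Classical.decRel G.Adj
  letI := Classical.decRel H.Adj
  -- r u : number of new edges of H at u ∈ L ; g u : lost edges
  set r : Fin n → ℕ := fun u => (Finset.univ.filter (fun v => H.Adj u v ∧ ¬G.Adj u v)).card
    with hrdef
  set g : Fin n → ℕ := fun u => (Finset.univ.filter (fun v => G.Adj u v ∧ ¬H.Adj u v)).card
    with hgdef
  -- step (a) : card of the edge difference is at most ∑_{u ∈ L} r u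
  have hsubset : eF H \ eF G ⊆ L.biUnion (fun u =>
      (Finset.univ.filter (fun v => H.Adj u v ∧ ¬G.Adj u v)).image (fun v => s(u, v))) := by
    intro e
    induction e using Sym2.ind with
    | _ a b =>
      intro he
      rw [Finset.mem_sdiff] at he
      have hadj : H.Adj a b := by
        have h1 := he.1
        unfold eF at h1
        rwa [SimpleGraph.mem_edgeFinset, SimpleGraph.mem_edgeSet] at h1
      have hnadj : ¬G.Adj a b := by
        intro hc
        apply he.2
        unfold eF
        rw [SimpleGraph.mem_edgeFinset, SimpleGraph.mem_edgeSet]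
        exact hc
      have hiff := hHb a b hadj
      simp only [Finset.mem_coe] at hiff
      rw [Finset.mem_biUnion]
      by_cases haL : a ∈ L
      · refine ⟨a, haL, ?_⟩
        rw [Finset.mem_image]
        refine ⟨b, ?_, rfl⟩
        rw [Finset.mem_filter]
        exact ⟨Finset.mem_univ _, hadj, hnadj⟩
      · have hbL : b ∈ L := by tauto
        refine ⟨b, hbL, ?_⟩
        rw [Finset.mem_image]
        refine ⟨a, ?_, Sym2.eq_swap⟩
        rw [Finset.mem_filter]
        exact ⟨Finset.mem_univ _, hadj.symm, fun hc => hnadj hc.symm⟩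
  have hcard_a : (eF H \ eF G).card ≤ ∑ u ∈ L, r u := by
    calc (eF H \ eF G).card ≤ (L.biUnion (fun u =>
        (Finset.univ.filter (fun v => H.Adj u v ∧ ¬G.Adj u v)).image (fun v => s(u, v)))).card :=
          Finset.card_le_card hsubset
      _ ≤ ∑ u ∈ L, ((Finset.univ.filter (fun v => H.Adj u v ∧ ¬G.Adj u v)).image
            (fun v => s(u, v))).card := Finset.card_biUnion_le
      _ ≤ ∑ u ∈ L, r u := Finset.sum_le_sum fun u _ => Finset.card_image_le
  -- step (b) : r u = g u, and the row sum of squares is r u + g u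
  have hdegH : ∀ u, (Finset.univ.filter (fun v => H.Adj u v)).card = d := by
    intro u
    have h1 := (show (IsRegOfDeg H d) from hH) u
    rwa [SimpleGraph.degree, SimpleGraph.neighborFinset_eq_filter] at h1
  have hdegG : ∀ u, (Finset.univ.filter (fun v => G.Adj u v)).card = d := by
    intro u
    have h1 := (show (IsRegOfDeg G d) from hG) u
    rwa [SimpleGraph.degree, SimpleGraph.neighborFinset_eq_filter] at h1
  have hrg : ∀ u, r u = g u := by
    intro u
    have h1 := Finset.card_filter_add_card_filter_not
      (s := Finset.univ.filter (fun v => H.Adj u v)) (p := fun v => G.Adj u v)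
    have h2 := Finset.card_filter_add_card_filter_not
      (s := Finset.univ.filter (fun v => G.Adj u v)) (p := fun v => H.Adj u v)
    rw [Finset.filter_filter, Finset.filter_filter, hdegH u] at h1
    rw [Finset.filter_filter, Finset.filter_filter, hdegG u] at h2
    have h3 : (Finset.univ.filter (fun v => H.Adj u v ∧ G.Adj u v)).card
        = (Finset.univ.filter (fun v => G.Adj u v ∧ H.Adj u v)).card := by
      congr 1
      apply Finset.filter_congr
      intro v _
      tauto
    simp only [hrdef, hgdef]
    omega
  have hrow : ∀ u, ∑ v, (aij H u v - aij G u v) ^ 2 = (r u : ℝ) + (g u : ℝ) := by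
    intro u
    have hterm : ∀ v, (aij H u v - aij G u v) ^ 2
        = (if H.Adj u v ∧ ¬G.Adj u v then (1:ℝ) else 0)
          + (if G.Adj u v ∧ ¬H.Adj u v then (1:ℝ) else 0) := by
      intro v
      by_cases h1 : H.Adj u v <;> by_cases h2 : G.Adj u v
      · rw [aij_eq_one_of_adj h1, aij_eq_one_of_adj h2,
          if_neg (by tauto), if_neg (by tauto)]
        norm_num
      · rw [aij_eq_one_of_adj h1, aij_eq_zero_of_not_adj h2,
          if_pos (by tauto), if_neg (by tauto)]
        norm_num
      · rw [aij_eq_zero_of_not_adj h1, aij_eq_one_of_adj h2,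
          if_neg (by tauto), if_pos (by tauto)]
        norm_num
      · rw [aij_eq_zero_of_not_adj h1, aij_eq_zero_of_not_adj h2,
          if_neg (by tauto), if_neg (by tauto)]
        norm_num
    rw [Finset.sum_congr rfl fun v _ => hterm v, Finset.sum_add_distrib,
      Finset.sum_boole, Finset.sum_boole]
  -- step (c) : combine with the key pair bound
  have hkey := key_pair hε hG hH hGb hHb hfG hfH
  have hsum_r : (2:ℝ) * ∑ u ∈ L, (r u : ℝ) ≤ 2 * ε * d * n * Real.sqrt (6 * d) := by
    have h1 : ∑ u ∈ L, ∑ v, (aij H u v - aij G u v) ^ 2 = 2 * ∑ u ∈ L, (r u : ℝ) := by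
      rw [Finset.sum_congr rfl fun u _ => hrow u, Finset.mul_sum]
      apply Finset.sum_congr rfl
      intro u _
      rw [← hrg u]
      ring
    linarith [hkey, h1.symm.trans_le hkey]
  have hfin : (∑ u ∈ L, (r u : ℝ)) ≤ ε * d * n * Real.sqrt (6 * d) := by linarith
  calc ((eF H \ eF G).card : ℝ) ≤ ∑ u ∈ L, (r u : ℝ) := by
        have := hcard_a
        push_cast
        exact_mod_cast Nat.cast_le.mpr this
    _ ≤ ε * d * n * Real.sqrt (6 * d) := hfin

end DiffCard

section Count

variable {n d : ℕ}

lemma sqrt6_le : Real.sqrt 6 ≤ 2.5 := by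
  nlinarith [Real.sq_sqrt (by norm_num : (0:ℝ) ≤ 6), Real.sqrt_nonneg (6:ℝ)]

lemma geom_le (M : ℕ) (hM : 2 ≤ M) : ∀ J : ℕ, ∑ j ∈ Finset.range (J + 1), M ^ j ≤ 2 * M ^ J := by
  intro J
  induction J with
  | zero => simp
  | succ J ih =>
    rw [Finset.sum_range_succ]
    have h1 : 2 * M ^ J ≤ M ^ (J + 1) := by
      rw [pow_succ, mul_comm (M ^ J) M]
      exact Nat.mul_le_mul_right _ hM
    have h2 : M ^ (J + 1) + M ^ (J + 1) = 2 * M ^ (J + 1) := by ring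
    omega

lemma edge_count {G : SimpleGraph (Fin n)} (hG : IsRegOfDeg G d) :
    2 * (eF G).card = d * n := by
  letI := Classical.decRel G.Adj
  have h := G.sum_degrees_eq_twice_card_edges
  unfold IsRegOfDeg at hG
  rw [Finset.sum_congr rfl fun v _ => hG v, Finset.sum_const, Finset.card_univ,
    Fintype.card_fin, smul_eq_mul] at h
  unfold eF
  rw [mul_comm d n, ← h]

lemma sym2_card_ge (hn : 2 ≤ n) : 2 ≤ Fintype.card (Sym2 (Fin n)) := by
  have h := Sym2.card (α := Fin n)
  rw [Fintype.card_fin] at h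
  rw [h]
  have h3 : (3:ℕ).choose 2 ≤ (n + 1).choose 2 := Nat.choose_le_choose 2 (by omega)
  have : (3:ℕ).choose 2 = 3 := by decide
  omega

lemma sym2_card_le (hn : 2 ≤ n) : Fintype.card (Sym2 (Fin n)) ≤ n ^ 2 := by
  have h := Sym2.card (α := Fin n)
  rw [Fintype.card_fin] at h
  rw [h, Nat.choose_two_right, Nat.add_sub_cancel]
  have key : (n + 1) * n ≤ n ^ 2 * 2 := by nlinarith
  calc (n + 1) * n / 2 ≤ n ^ 2 * 2 / 2 := Nat.div_le_div_right key
    _ = n ^ 2 := Nat.mul_div_cancel _ (by norm_num)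

/-- the number of graphs compatible with a single sketch. -/
lemma count_per_f (hn : 2 ≤ n) (J : ℕ)
    (P : SimpleGraph (Fin n) → Prop) [DecidablePred P]
    (hPreg : ∀ G, P G → IsRegOfDeg G d)
    (hdiff : ∀ G H : SimpleGraph (Fin n), P G → P H → ((eF H) \ (eF G)).card ≤ J)
    (hdn : 2 ∣ d * n) :
    (Finset.univ.filter P).card ≤ 2 ^ (d * n / 2) * (2 * (n ^ 2) ^ J) := by
  classical
  rcases Finset.eq_empty_or_nonempty (Finset.univ.filter P) with hemp | ⟨G₀, hG₀⟩
  · rw [hemp]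
    simp
  · rw [Finset.mem_filter] at hG₀
    have hPG₀ := hG₀.2
    set T := (eF G₀).powerset ×ˢ
      ((Finset.univ : Finset (Sym2 (Fin n))).powerset.filter (fun t => t.card ≤ J)) with hTdef
    have hmap : ∀ H ∈ Finset.univ.filter P,
        ((eF H ∩ eF G₀, eF H \ eF G₀) :
          Finset (Sym2 (Fin n)) × Finset (Sym2 (Fin n))) ∈ T := by
      intro H hH
      rw [Finset.mem_filter] at hH
      rw [hTdef, Finset.mem_product]
      constructor
      · rw [Finset.mem_powerset]
        exact Finset.inter_subset_right
      · rw [Finset.mem_filter, Finset.mem_powerset]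
        exact ⟨Finset.subset_univ _, hdiff G₀ H hPG₀ hH.2⟩
    have hinj : Set.InjOn (fun H : SimpleGraph (Fin n) =>
        ((eF H ∩ eF G₀, eF H \ eF G₀) :
          Finset (Sym2 (Fin n)) × Finset (Sym2 (Fin n))))
        ↑(Finset.univ.filter P) := by
      intro H1 h1 H2 h2 heq
      simp only [Prod.mk.injEq] at heq
      have h3 : eF H1 = eF H2 := by
        have e1 : eF H1 ∩ eF G₀ ∪ eF H1 \ eF G₀ = eF H1 := by
          rw [← Finset.sup_eq_union, ← Finset.inf_eq_inter]
          exact sup_inf_sdiff _ _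
        have e2 : eF H2 ∩ eF G₀ ∪ eF H2 \ eF G₀ = eF H2 := by
          rw [← Finset.sup_eq_union, ← Finset.inf_eq_inter]
          exact sup_inf_sdiff _ _
        rw [← e1, ← e2, heq.1, heq.2]
      exact eF_inj h3
    have hcard1 : (Finset.univ.filter P).card ≤ T.card :=
      Finset.card_le_card_of_injOn _ hmap hinj
    have hTcard : T.card = 2 ^ (d * n / 2) *
        ((Finset.univ : Finset (Sym2 (Fin n))).powerset.filter (fun t => t.card ≤ J)).card := by
      rw [hTdef, Finset.card_product, Finset.card_powerset]
      congr 2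
      have h := edge_count (hPreg G₀ hPG₀)
      omega
    have hfilter : ((Finset.univ : Finset (Sym2 (Fin n))).powerset.filter
        (fun t => t.card ≤ J)).card ≤ 2 * (n ^ 2) ^ J := by
      have hsub : ((Finset.univ : Finset (Sym2 (Fin n))).powerset.filter (fun t => t.card ≤ J))
          ⊆ (Finset.range (J + 1)).biUnion
            (fun j => Finset.powersetCard j (Finset.univ : Finset (Sym2 (Fin n)))) := by
        intro t ht
        rw [Finset.mem_filter] at ht
        rw [Finset.mem_biUnion]
        refine ⟨t.card, ?_, ?_⟩
        · rw [Finset.mem_range]; omega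
        · rw [Finset.mem_powersetCard]
          exact ⟨Finset.subset_univ _, rfl⟩
      have h1 := Finset.card_le_card hsub
      have h2 := Finset.card_biUnion_le (s := Finset.range (J + 1))
        (t := fun j => Finset.powersetCard j (Finset.univ : Finset (Sym2 (Fin n))))
      have h3 : ∀ j, (Finset.powersetCard j (Finset.univ : Finset (Sym2 (Fin n)))).card
          ≤ (n ^ 2) ^ j := by
        intro j
        rw [Finset.card_powersetCard, Finset.card_univ]
        calc (Fintype.card (Sym2 (Fin n))).choose j ≤ (Fintype.card (Sym2 (Fin n))) ^ j :=
              Nat.choose_le_pow _ _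
          _ ≤ (n ^ 2) ^ j := Nat.pow_le_pow_left (sym2_card_le hn) _
      have h4 : ∑ j ∈ Finset.range (J + 1),
          (Finset.powersetCard j (Finset.univ : Finset (Sym2 (Fin n)))).card
          ≤ ∑ j ∈ Finset.range (J + 1), (n ^ 2) ^ j :=
        Finset.sum_le_sum fun j _ => h3 j
      have h5 : ∑ j ∈ Finset.range (J + 1), (n ^ 2) ^ j ≤ 2 * (n ^ 2) ^ J :=
        geom_le _ (by nlinarith) J
      omega
    calc (Finset.univ.filter P).card ≤ T.card := hcard1
      _ = 2 ^ (d * n / 2) * ((Finset.univ : Finset (Sym2 (Fin n))).powerset.filter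
            (fun t => t.card ≤ J)).card := hTcard
      _ ≤ 2 ^ (d * n / 2) * (2 * (n ^ 2) ^ J) := Nat.mul_le_mul_left _ hfilter

end Count

end CSFLB

open CSFLB in
/-- If every simple `d`-regular bipartite graph on `n` labelled vertices with a fixed
balanced bipartition (`B_{n,d}`) has an `ε`-cut sketch in a family `ℱ` of functions
`{-1,1}ⁿ → ℝ`, then `|ℱ| ≥ |B_{n,d}| / 2^(dn/2 + 9d^(3/2)εn log₂ n)`. -/
theorem cut_sketch_family_lower_bound (n d : ℕ) (hn : 2 ≤ n) (hneven : Even n)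
    (hd : 1 ≤ d) (ε : ℝ) (hε : 0 < ε) (hε' : ε ≤ 1 / 3)
    (L : Finset (Fin n)) (hL : L.card = n / 2)
    (ℱ : Finset ((Fin n → ℝ) → ℝ))
    (hcover : ∀ G : SimpleGraph (Fin n),
      IsRegOfDeg G d → IsBipartiteWith G (↑L : Set (Fin n)) →
      ∃ f ∈ ℱ, ∀ x : Fin n → ℝ, (∀ i, x i = 1 ∨ x i = -1) →
        (1 - ε) * lapQuadForm G x ≤ f x ∧ f x ≤ (1 + ε) * lapQuadForm G x) :
    ((Set.ncard {G : SimpleGraph (Fin n) | IsRegOfDeg G d ∧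
        IsBipartiteWith G (↑L : Set (Fin n))}) : ℝ) /
        2 ^ ((d : ℝ) * n / 2 + 9 * (d : ℝ) ^ ((3 : ℝ) / 2) * ε * n * Real.logb 2 n) ≤
      (ℱ.card : ℝ) := by
  classical
  haveI hfinG : Finite (SimpleGraph (Fin n)) := by
    apply Finite.of_injective (fun G : SimpleGraph (Fin n) => G.Adj)
    intro G H h
    exact SimpleGraph.ext h
  set B : Set (SimpleGraph (Fin n)) :=
    {G : SimpleGraph (Fin n) | IsRegOfDeg G d ∧ IsBipartiteWith G (↑L : Set (Fin n))} with hBdef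
  set E : ℝ := (d : ℝ) * n / 2 + 9 * (d : ℝ) ^ ((3 : ℝ) / 2) * ε * n * Real.logb 2 n with hEdef
  have hn1 : (1:ℝ) ≤ (n:ℝ) := by exact_mod_cast Nat.one_le_of_lt hn
  have hn2 : (2:ℝ) ≤ (n:ℝ) := by exact_mod_cast hn
  have hnpos : (0:ℝ) < (n:ℝ) := by linarith
  have hlogb : 0 ≤ Real.logb 2 n := Real.logb_nonneg (by norm_num) hn1
  have hd32 : 0 ≤ (d:ℝ) ^ ((3:ℝ)/2) := Real.rpow_nonneg (Nat.cast_nonneg d) _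
  have hE0 : 0 ≤ E := by
    rw [hEdef]
    have h1 : 0 ≤ (d:ℝ) * n / 2 := by positivity
    have h2 : 0 ≤ 9 * (d:ℝ) ^ ((3:ℝ)/2) * ε * n * Real.logb 2 n := by
      apply mul_nonneg
      apply mul_nonneg
      apply mul_nonneg
      apply mul_nonneg (by norm_num) hd32
      exact hε.le
      exact Nat.cast_nonneg n
      exact hlogb
    linarith
  have h2Epos : (0:ℝ) < (2:ℝ) ^ E := Real.rpow_pos_of_pos (by norm_num) E
  have h2E1 : (1:ℝ) ≤ (2:ℝ) ^ E := by
    have := Real.rpow_le_rpow_of_exponent_le (by norm_num : (1:ℝ) ≤ 2) hE0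
    rwa [Real.rpow_zero] at this
  rw [div_le_iff₀ h2Epos]
  have hfinB : B.Finite := Set.toFinite B
  have hncard : (B.ncard : ℝ) = (hfinB.toFinset.card : ℝ) := by
    rw [Set.ncard_eq_toFinset_card B hfinB]
  set 𝔅 : Finset (SimpleGraph (Fin n)) := hfinB.toFinset with h𝔅def
  have hmem𝔅 : ∀ G, G ∈ 𝔅 ↔ (IsRegOfDeg G d ∧ IsBipartiteWith G (↑L : Set (Fin n))) := by
    intro G
    rw [h𝔅def, Set.Finite.mem_toFinset]
    rfl
  rw [hncard]
  rcases lt_or_ge (ε * (2 * (d:ℝ) - 1)) 1 with hlt | hreg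
  · -- regime A : the sketch determines the graph
    set F : SimpleGraph (Fin n) → ((Fin n → ℝ) → ℝ) := fun G =>
      if h : IsRegOfDeg G d ∧ IsBipartiteWith G (↑L : Set (Fin n)) then
        (hcover G h.1 h.2).choose else (fun _ => 0) with hFdef
    have hFmem : ∀ G ∈ 𝔅, F G ∈ ℱ := by
      intro G hG
      rw [hmem𝔅] at hG
      rw [hFdef]
      simp only [dif_pos hG]
      exact (hcover G hG.1 hG.2).choose_spec.1
    have hFsk : ∀ G ∈ 𝔅, Sk ε (F G) G := by
      intro G hG
      rw [hmem𝔅] at hG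
      rw [hFdef]
      simp only [dif_pos hG]
      exact (hcover G hG.1 hG.2).choose_spec.2
    have hinj : Set.InjOn F ↑𝔅 := by
      intro G hG H hH heq
      have hG' := (hmem𝔅 G).mp hG
      have hH' := (hmem𝔅 H).mp hH
      have hskG := hFsk G hG
      have hskH := hFsk H hH
      rw [heq] at hskG
      exact sk_inj hG'.1 hH'.1 hskG hskH hlt
    have hcard : 𝔅.card ≤ ℱ.card := Finset.card_le_card_of_injOn F hFmem hinj
    calc (𝔅.card : ℝ) ≤ (ℱ.card : ℝ) := by exact_mod_cast hcard
      _ = (ℱ.card : ℝ) * 1 := by ring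
      _ ≤ (ℱ.card : ℝ) * 2 ^ E := by
          apply mul_le_mul_of_nonneg_left h2E1 (Nat.cast_nonneg _)
  · -- regime C : counting graphs per sketch
    have hd2 : (2:ℝ) ≤ (d:ℝ) := by nlinarith
    have hdpos : (0:ℝ) < (d:ℝ) := by linarith
    have hsqrtd : (1:ℝ) ≤ Real.sqrt d := by
      rw [show (1:ℝ) = Real.sqrt 1 from (Real.sqrt_one).symm]
      exact Real.sqrt_le_sqrt (by linarith)
    have hεd : (1:ℝ) ≤ ε * (2 * d) := by nlinarith
    -- the floor bound
    set K' : ℝ := ε * d * n * Real.sqrt (6 * d) with hK'def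
    have hK'0 : 0 ≤ K' := by
      apply mul_nonneg
      apply mul_nonneg (mul_nonneg hε.le hdpos.le) hnpos.le
      exact Real.sqrt_nonneg _
    set J : ℕ := ⌊K'⌋₊ with hJdef
    -- cover by compatible classes
    have hcover' : 𝔅 ⊆ ℱ.biUnion (fun f => 𝔅.filter (fun G => Sk ε f G)) := by
      intro G hG
      have hG' := (hmem𝔅 G).mp hG
      obtain ⟨f, hf, hsk⟩ := hcover G hG'.1 hG'.2
      rw [Finset.mem_biUnion]
      exact ⟨f, hf, Finset.mem_filter.mpr ⟨hG, hsk⟩⟩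
    -- per sketch counting
    have hper : ∀ f ∈ ℱ, (𝔅.filter (fun G => Sk ε f G)).card
        ≤ 2 ^ (d * n / 2) * (2 * (n ^ 2) ^ J) := by
      intro f _
      have hset : 𝔅.filter (fun G => Sk ε f G) = Finset.univ.filter
          (fun G => (IsRegOfDeg G d ∧ IsBipartiteWith G (↑L : Set (Fin n))) ∧ Sk ε f G) := by
        ext G
        rw [Finset.mem_filter, Finset.mem_filter, hmem𝔅]
        constructor
        · rintro ⟨h1, h2⟩; exact ⟨Finset.mem_univ _, h1, h2⟩
        · rintro ⟨_, h1, h2⟩; exact ⟨h1, h2⟩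
      rw [hset]
      apply count_per_f hn J _ (fun G hG => hG.1.1)
      · intro G H hPG hPH
        apply Nat.le_floor
        calc ((eF H \ eF G).card : ℝ)
            ≤ ε * d * n * Real.sqrt (6 * d) :=
              diff_card_le hε hPG.1.1 hPH.1.1 hPG.1.2 hPH.1.2 hPG.2 hPH.2
          _ = K' := by rw [hK'def]
      · obtain ⟨m, hm⟩ := hneven
        exact ⟨d * m, by rw [hm]; ring⟩
    have hcardsum : 𝔅.card ≤ ℱ.card * (2 ^ (d * n / 2) * (2 * (n ^ 2) ^ J)) := by
      calc 𝔅.card ≤ (ℱ.biUnion (fun f => 𝔅.filter (fun G => Sk ε f G))).card :=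
            Finset.card_le_card hcover'
        _ ≤ ∑ f ∈ ℱ, (𝔅.filter (fun G => Sk ε f G)).card := Finset.card_biUnion_le
        _ ≤ ℱ.card * (2 ^ (d * n / 2) * (2 * (n ^ 2) ^ J)) := by
            calc ∑ f ∈ ℱ, (𝔅.filter (fun G => Sk ε f G)).card
                ≤ ∑ _f ∈ ℱ, 2 ^ (d * n / 2) * (2 * (n ^ 2) ^ J) :=
                  Finset.sum_le_sum hper
              _ = ℱ.card * (2 ^ (d * n / 2) * (2 * (n ^ 2) ^ J)) := by
                  rw [Finset.sum_const, smul_eq_mul]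
    -- now the real arithmetic
    have hreal : ((2:ℝ) ^ (d * n / 2 : ℕ) * (2 * ((n:ℝ) ^ 2) ^ J)) ≤ 2 ^ E := by
      obtain ⟨m, hm⟩ := hneven
      have hdn2 : ((d * n / 2 : ℕ) : ℝ) = (d:ℝ) * n / 2 := by
        have h0 : d * n = 2 * (d * m) := by rw [hm]; ring
        have h1 : d * n / 2 = d * m := by omega
        rw [h1, hm]
        push_cast
        ring
      have hEsplit : (2:ℝ) ^ E = 2 ^ ((d:ℝ) * n / 2)
          * 2 ^ (9 * (d : ℝ) ^ ((3 : ℝ) / 2) * ε * n * Real.logb 2 n) := by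
        rw [hEdef, Real.rpow_add (by norm_num)]
      have hfirst : (2:ℝ) ^ (d * n / 2 : ℕ) = 2 ^ ((d:ℝ) * n / 2) := by
        rw [← Real.rpow_natCast 2 (d * n / 2), hdn2]
      -- second factor : 2 ^ (9 d^{3/2} ε n log₂ n) = n ^ (9 ε d^{3/2} n)
      set Q : ℝ := ε * ((d:ℝ) * Real.sqrt d) * n with hQdef
      have hd32eq : (d:ℝ) ^ ((3:ℝ)/2) = (d:ℝ) * Real.sqrt d := by
        rw [show (3:ℝ)/2 = 1 + 1/2 by norm_num, Real.rpow_add hdpos, Real.rpow_one,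
          ← Real.sqrt_eq_rpow]
      have hQ1 : 1 ≤ Q := by
        rw [hQdef]
        have c0 : (d:ℝ) * 1 ≤ (d:ℝ) * Real.sqrt d :=
          mul_le_mul_of_nonneg_left hsqrtd hdpos.le
        have c2 : ε * ((d:ℝ) * 1) ≤ ε * ((d:ℝ) * Real.sqrt d) :=
          mul_le_mul_of_nonneg_left c0 hε.le
        have c1 : 1/2 ≤ ε * ((d:ℝ) * 1) := by rw [mul_one]; linarith
        have c3 : (1:ℝ)/2 ≤ ε * ((d:ℝ) * Real.sqrt d) := le_trans c1 c2
        have c4 : (1/2 : ℝ) * 2 ≤ (ε * ((d:ℝ) * Real.sqrt d)) * n :=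
          mul_le_mul c3 hn2 (by norm_num) (le_trans (by norm_num) c3)
        linarith
      have hQ0 : 0 ≤ Q := by linarith
      have hsecond : (2:ℝ) ^ (9 * (d : ℝ) ^ ((3 : ℝ) / 2) * ε * n * Real.logb 2 n)
          = (n:ℝ) ^ (9 * Q) := by
        have h1 : 9 * (d : ℝ) ^ ((3 : ℝ) / 2) * ε * n * Real.logb 2 n
            = Real.logb 2 n * (9 * Q) := by
          rw [hd32eq, hQdef]; ring
        rw [h1, Real.rpow_mul (by norm_num : (0:ℝ) ≤ 2),
          Real.rpow_logb (by norm_num) (by norm_num) hnpos]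
      -- bound the (n²)^J factor
      have hsqrt6 : Real.sqrt 6 ≤ 2.5 := sqrt6_le
      have hK'Q : K' = Real.sqrt 6 * Q := by
        rw [hK'def, hQdef, Real.sqrt_mul (by norm_num : (0:ℝ) ≤ 6)]
        ring
      have hJle : (J:ℝ) ≤ Real.sqrt 6 * Q := by
        rw [← hK'Q]
        exact Nat.floor_le hK'0
      have hpow1 : ((n:ℝ) ^ 2) ^ J = (n:ℝ) ^ ((2 * J : ℕ) : ℝ) := by
        rw [Real.rpow_natCast, ← pow_mul]
      have hexp1 : ((2 * J : ℕ) : ℝ) ≤ 2 * Real.sqrt 6 * Q := by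
        push_cast
        linarith
      have hmono : (n:ℝ) ^ ((2 * J : ℕ) : ℝ) ≤ (n:ℝ) ^ (2 * Real.sqrt 6 * Q) :=
        Real.rpow_le_rpow_of_exponent_le hn1 hexp1
      have h2len : (2:ℝ) ≤ (n:ℝ) ^ (1:ℝ) := by
        rw [Real.rpow_one]; exact hn2
      have hfinal2 : 2 * ((n:ℝ) ^ 2) ^ J ≤ (n:ℝ) ^ (9 * Q) := by
        calc 2 * ((n:ℝ) ^ 2) ^ J ≤ (n:ℝ) ^ (1:ℝ) * (n:ℝ) ^ (2 * Real.sqrt 6 * Q) := by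
              apply mul_le_mul h2len (by rw [hpow1]; exact hmono)
                (by positivity) (by positivity)
          _ = (n:ℝ) ^ (1 + 2 * Real.sqrt 6 * Q) := by
              rw [← Real.rpow_add hnpos]
          _ ≤ (n:ℝ) ^ (9 * Q) := by
              apply Real.rpow_le_rpow_of_exponent_le hn1
              have e1 : 2 * Real.sqrt 6 * Q ≤ 5 * Q := by
                apply mul_le_mul_of_nonneg_right _ hQ0
                linarith
              linarith
      rw [hEsplit, hfirst, hsecond]
      apply mul_le_mul_of_nonneg_left hfinal2 (by positivity)
    -- put everything together
    calc (𝔅.card : ℝ)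
        ≤ (ℱ.card : ℝ) * ((2:ℝ) ^ (d * n / 2 : ℕ) * (2 * ((n:ℝ) ^ 2) ^ J)) := by
          have := hcardsum
          calc (𝔅.card : ℝ) ≤ ((ℱ.card * (2 ^ (d * n / 2) * (2 * (n ^ 2) ^ J)) : ℕ) : ℝ) := by
                exact_mod_cast this
            _ = (ℱ.card : ℝ) * ((2:ℝ) ^ (d * n / 2 : ℕ) * (2 * ((n:ℝ) ^ 2) ^ J)) := by
                push_cast
                ring
      _ ≤ (ℱ.card : ℝ) * 2 ^ E :=
          mul_le_mul_of_nonneg_left hreal (Nat.cast_nonneg _)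
end
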